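/- arXiv:math/0402438 — 4 statements merged into one kernel-verified Lean document; each statement's English description precedes it below -/
import Mathlib

section
/- Fix exponent matrices A_0, …, A_d ∈ (ℝ ∪ {+∞})^{n×n} and a finite corner γ of P_A, of multiplicity μ. Let ν be the sum of the multiplicities of the finite corners of P_A that are strictly greater than γ, plus the valuation of P_A (the smallest k such that the coefficient of X^k in P_A is ≠ 𝟘), which is the multiplicity of the corner 𝟘 = +∞. Then there exists a nonzero polynomial Φ, with complex coefficients, in the family of variables { (a_k)_{ij} : 0 ≤ k ≤ d, (A_k)_{ij} < +∞ }, such that for every choice of complex matrices a_0, …, a_d with Φ((a_k)_{ij}) ≠ 0, the auxiliary pencil a^{(γ)} built with the graphs G_k = Opt_k(γ) satisfies: det(a^{(γ)}) ∈ ℂ[X] has exactly μ nonzero roots counted with multiplicity, and 0 is a root of det(a^{(γ)}) of multiplicity exactly ν. -/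
open Polynomial Filter Topology Finset

noncomputable section

/-- The min-plus semiring `ℝ ∪ {+∞}`, with `min` as addition and `+` as
multiplication (so `⊤ = +∞` is the min-plus zero `𝟘`). -/
abbrev Rmin := WithTop ℝ

/-- Min-plus permanent of a matrix: `perm B = min_σ Σ_i B_{i σ(i)}`. -/
def mpPerm {n : ℕ} (B : Matrix (Fin n) (Fin n) Rmin) : Rmin :=
  Finset.univ.inf fun σ : Equiv.Perm (Fin n) => ∑ i, B i (σ i)

/-- Coefficient of `X^m` in the min-plus characteristic polynomial
`P_A = perm (A_0 ⊕ X A_1 ⊕ ⋯ ⊕ X^d A_d)`: expanding the min-plus permanent of the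
pencil, the coefficient of `X^m` is the min over permutations `σ` and over
exponent choices `κ : Fin n → Fin (d+1)` with `Σ_i κ i = m` of `Σ_i (A_{κ i})_{i σ(i)}`. -/
def PAcoeff {n d : ℕ} (A : Fin (d + 1) → Matrix (Fin n) (Fin n) Rmin) (m : ℕ) : Rmin :=
  Finset.univ.inf fun σ : Equiv.Perm (Fin n) =>
    (Finset.univ.filter fun κ : Fin n → Fin (d + 1) => ∑ i, (κ i : ℕ) = m).inf
      fun κ => ∑ i, A (κ i) i (σ i)

/-- The polynomial function `P̂_A(γ) = min_m (P_m + m γ)` associated with the formal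
min-plus characteristic polynomial `P_A` (whose degree is at most `n * d`). -/
def PAhat {n d : ℕ} (A : Fin (d + 1) → Matrix (Fin n) (Fin n) Rmin) (γ : ℝ) : Rmin :=
  (Finset.range (n * d + 1)).inf fun m => PAcoeff A m + (((m : ℝ) * γ : ℝ) : Rmin)

/-- The set of exponents `m` achieving the minimum in `P̂_A(γ)` with a finite
coefficient (the "active" slopes of the concave piecewise linear function `P̂_A` at `γ`). -/
def activeSet {n d : ℕ} (A : Fin (d + 1) → Matrix (Fin n) (Fin n) Rmin) (γ : ℝ) : Finset ℕ :=
  (Finset.range (n * d + 1)).filter fun m =>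
    PAcoeff A m ≠ ⊤ ∧ PAcoeff A m + (((m : ℝ) * γ : ℝ) : Rmin) = PAhat A γ

/-- `γ ∈ ℝ` is a finite corner of `P_A` iff the piecewise linear concave function `P̂_A`
is not differentiable at `γ`, i.e. at least two distinct slopes are active at `γ`. -/
def IsFiniteCorner {n d : ℕ} (A : Fin (d + 1) → Matrix (Fin n) (Fin n) Rmin) (γ : ℝ) : Prop :=
  ∃ m₁ ∈ activeSet A γ, ∃ m₂ ∈ activeSet A γ, m₁ ≠ m₂

/-- Multiplicity of a finite corner `γ`: `P̂_A'(γ⁻) - P̂_A'(γ⁺)`, i.e. the largest active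
slope minus the smallest active slope at `γ`. -/
def cornerMult {n d : ℕ} (A : Fin (d + 1) → Matrix (Fin n) (Fin n) Rmin) (γ : ℝ) : ℕ :=
  (activeSet A γ).sup id - ((activeSet A γ).min).getD 0

/-- Valuation of `P_A`: smallest `k` whose coefficient is `≠ 𝟘`; this is the
multiplicity of the corner `𝟘 = +∞`. -/
def PAval {n d : ℕ} (A : Fin (d + 1) → Matrix (Fin n) (Fin n) Rmin) : ℕ :=
  sInf {m | PAcoeff A m ≠ ⊤}

/-- Degree of `P_A`: largest `k` whose coefficient is `≠ 𝟘`. -/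
def PAdeg {n d : ℕ} (A : Fin (d + 1) → Matrix (Fin n) (Fin n) Rmin) : ℕ :=
  sSup {m | PAcoeff A m ≠ ⊤}

/-- The matrix `Â(γ)`, with entries `Â_{ij}(γ) = min_{0 ≤ k ≤ d} ((A_k)_{ij} + k γ)`. -/
def AhatMat {n d : ℕ} (A : Fin (d + 1) → Matrix (Fin n) (Fin n) Rmin) (γ : ℝ) :
    Matrix (Fin n) (Fin n) Rmin :=
  fun i j => Finset.univ.inf fun k : Fin (d + 1) => A k i j + ((((k : ℕ) : ℝ) * γ : ℝ) : Rmin)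

/-- `(i,j)` is an arc of the digraph `Opt(B)` of arcs belonging to optimal assignments. -/
def OptArc {n : ℕ} (B : Matrix (Fin n) (Fin n) Rmin) (i j : Fin n) : Prop :=
  ∃ σ : Equiv.Perm (Fin n), σ i = j ∧ (∑ l, B l (σ l)) = mpPerm B

/-- `(i,j)` is an arc of the digraph `Opt_k(γ)`. -/
def OptK {n d : ℕ} (A : Fin (d + 1) → Matrix (Fin n) (Fin n) Rmin) (γ : ℝ)
    (k : Fin (d + 1)) (i j : Fin n) : Prop :=
  OptArc (AhatMat A γ) i j ∧ A k i j + ((((k : ℕ) : ℝ) * γ : ℝ) : Rmin) = AhatMat A γ i j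

/-- `(U, V)` is a Hungarian pair with respect to `B`. -/
def HungarianPair {n : ℕ} (B : Matrix (Fin n) (Fin n) Rmin) (U V : Fin n → ℝ) : Prop :=
  (∀ i j, ((U i + V j : ℝ) : Rmin) ≤ B i j) ∧
    (((∑ i, U i) + ∑ j, V j : ℝ) : Rmin) = mpPerm B

/-- `(i,j)` is an arc of the saturation graph `Sat(B,U,V)`. -/
def SatArc {n : ℕ} (B : Matrix (Fin n) (Fin n) Rmin) (U V : Fin n → ℝ) (i j : Fin n) : Prop :=
  B i j = ((U i + V j : ℝ) : Rmin)

/-- `(i,j)` is an arc of the digraph `Sat_k(γ, U, V)`. -/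
def SatK {n d : ℕ} (A : Fin (d + 1) → Matrix (Fin n) (Fin n) Rmin) (γ : ℝ)
    (U V : Fin n → ℝ) (k : Fin (d + 1)) (i j : Fin n) : Prop :=
  SatArc (AhatMat A γ) U V i j ∧
    A k i j + ((((k : ℕ) : ℝ) * γ : ℝ) : Rmin) = AhatMat A γ i j

open Classical in
/-- `b^G` : keep the entries of `b` on the arcs of the digraph `G`, set others to `0`. -/
def restrictG {n : ℕ} (b : Matrix (Fin n) (Fin n) ℂ) (G : Fin n → Fin n → Prop) :
    Matrix (Fin n) (Fin n) ℂ :=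
  fun i j => if G i j then b i j else 0

/-- The auxiliary pencil `a^{(γ)} = a_0^{G_0} + X a_1^{G_1} + ⋯ + X^d a_d^{G_d}`
built from digraphs `G_0, …, G_d`, as a matrix of polynomials in `ℂ[X]`. -/
def auxPencil {n d : ℕ} (a : Fin (d + 1) → Matrix (Fin n) (Fin n) ℂ)
    (G : Fin (d + 1) → Fin n → Fin n → Prop) : Matrix (Fin n) (Fin n) (Polynomial ℂ) :=
  fun i j => ∑ k : Fin (d + 1), Polynomial.C (restrictG (a k) (G k) i j) * X ^ (k : ℕ)

/-- The polynomial `det 𝒜_ε ∈ ℂ[X]` of the perturbed pencil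
`𝒜_ε = 𝒜_{ε,0} + X 𝒜_{ε,1} + ⋯ + X^d 𝒜_{ε,d}`, whose roots are the eigenvalues. -/
def pencilPoly {n d : ℕ} (𝒜 : ℝ → Fin (d + 1) → Matrix (Fin n) (Fin n) ℂ) (ε : ℝ) :
    Polynomial ℂ :=
  Matrix.det fun i j => ∑ k : Fin (d + 1), Polynomial.C (𝒜 ε k i j) * X ^ (k : ℕ)

/-- The perturbed pencil `𝒜_ε` has the asymptotics given by `(a_k, A_k)`:
`(𝒜_{ε,k})_{ij} = (a_k)_{ij} ε^{(A_k)_{ij}} + o(ε^{(A_k)_{ij}})` as `ε → 0⁺`,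
where `(A_k)_{ij} = +∞` means that the entry vanishes in a neighborhood of `0`. -/
def HasAsymptotics {n d : ℕ} (𝒜 : ℝ → Fin (d + 1) → Matrix (Fin n) (Fin n) ℂ)
    (a : Fin (d + 1) → Matrix (Fin n) (Fin n) ℂ)
    (A : Fin (d + 1) → Matrix (Fin n) (Fin n) Rmin) : Prop :=
  ∀ k i j,
    (A k i j = ⊤ → ∀ᶠ ε in 𝓝[>] (0 : ℝ), 𝒜 ε k i j = 0) ∧
    (∀ t : ℝ, A k i j = (t : Rmin) →
      (fun ε : ℝ => 𝒜 ε k i j - a k i j * ((ε ^ t : ℝ) : ℂ)) =o[𝓝[>] (0 : ℝ)]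
        fun ε : ℝ => (ε ^ t : ℝ))

open Tropical

lemma trop_mpPerm {n : ℕ} (B : Matrix (Fin n) (Fin n) Rmin) :
    trop (mpPerm B) = ∑ σ : Equiv.Perm (Fin n), ∏ i, trop (B i (σ i)) := by
  rw [mpPerm, Finset.trop_inf]
  exact Finset.sum_congr rfl fun σ _ => trop_sum _ _

lemma trop_PAcoeff {n d : ℕ} (A : Fin (d + 1) → Matrix (Fin n) (Fin n) Rmin) (m : ℕ) :
    trop (PAcoeff A m) = ∑ σ : Equiv.Perm (Fin n),
      ∑ κ ∈ (Finset.univ.filter fun κ : Fin n → Fin (d + 1) => ∑ i, (κ i : ℕ) = m),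
        ∏ i, trop (A (κ i) i (σ i)) := by
  rw [PAcoeff, Finset.trop_inf]
  refine Finset.sum_congr rfl fun σ _ => ?_
  rw [Finset.trop_inf]
  exact Finset.sum_congr rfl fun κ _ => trop_sum _ _

lemma trop_PAhat {n d : ℕ} (A : Fin (d + 1) → Matrix (Fin n) (Fin n) Rmin) (γ : ℝ) :
    trop (PAhat A γ) = ∑ m ∈ Finset.range (n * d + 1),
      trop (PAcoeff A m) * trop (((m : ℝ) * γ : ℝ) : Rmin) := by
  rw [PAhat, Finset.trop_inf]
  exact Finset.sum_congr rfl fun m _ => trop_add _ _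

lemma trop_AhatMat {n d : ℕ} (A : Fin (d + 1) → Matrix (Fin n) (Fin n) Rmin) (γ : ℝ) (i j : Fin n) :
    trop (AhatMat A γ i j) = ∑ k : Fin (d + 1),
      trop (A k i j) * trop (((((k : ℕ) : ℝ) * γ : ℝ) : Rmin)) := by
  rw [AhatMat, Finset.trop_inf]
  exact Finset.sum_congr rfl fun k _ => trop_add _ _

lemma sum_kappa_le {n d : ℕ} (κ : Fin n → Fin (d + 1)) : ∑ i, (κ i : ℕ) ≤ n * d := by
  calc ∑ i, (κ i : ℕ) ≤ ∑ _i : Fin n, d := Finset.sum_le_sum fun i _ =>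
        Nat.lt_succ_iff.mp (κ i).isLt
    _ = n * d := by simp [Finset.sum_const, mul_comm]

lemma mpPerm_AhatMat {n d : ℕ} (A : Fin (d + 1) → Matrix (Fin n) (Fin n) Rmin) (γ : ℝ) :
    mpPerm (AhatMat A γ) = PAhat A γ := by
  have h := congrArg untrop (?_ : trop (mpPerm (AhatMat A γ)) = trop (PAhat A γ))
  · simpa using h
  rw [trop_mpPerm, trop_PAhat]
  have key : ∀ σ : Equiv.Perm (Fin n),
      (∏ i, trop (AhatMat A γ i (σ i))) =
      ∑ m ∈ Finset.range (n * d + 1),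
        (∑ κ ∈ (Finset.univ.filter fun κ : Fin n → Fin (d + 1) => ∑ i, (κ i : ℕ) = m),
          ∏ i, trop (A (κ i) i (σ i))) * trop (((m : ℝ) * γ : ℝ) : Rmin) := by
    intro σ
    have e1 : (∏ i, trop (AhatMat A γ i (σ i))) =
        ∑ κ ∈ Fintype.piFinset (fun _ : Fin n => (Finset.univ : Finset (Fin (d + 1)))),
          ∏ i, (trop (A (κ i) i (σ i)) * trop (((((κ i : ℕ) : ℝ)) * γ : ℝ) : Rmin)) := by
      rw [show (∏ i, trop (AhatMat A γ i (σ i))) =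
          ∏ i, ∑ k ∈ (Finset.univ : Finset (Fin (d+1))),
            (trop (A k i (σ i)) * trop (((((k : ℕ) : ℝ)) * γ : ℝ) : Rmin)) from
          Finset.prod_congr rfl fun i _ => trop_AhatMat A γ i (σ i)]
      exact Finset.prod_univ_sum _ _
    rw [e1, Fintype.piFinset_univ]
    have e2 : ∀ κ : Fin n → Fin (d + 1),
        (∏ i, (trop (A (κ i) i (σ i)) * trop (((((κ i : ℕ) : ℝ)) * γ : ℝ) : Rmin))) =
        (∏ i, trop (A (κ i) i (σ i))) * trop ((((∑ i, (κ i : ℕ) : ℕ) : ℝ) * γ : ℝ) : Rmin) := by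
      intro κ
      rw [Finset.prod_mul_distrib]
      congr 1
      apply untrop_injective
      simp only [untrop_prod, untrop_trop, Function.comp]
      rw [← WithTop.coe_sum]
      norm_cast
      push_cast
      rw [Finset.sum_mul]
    calc (∑ κ : Fin n → Fin (d + 1),
          ∏ i, (trop (A (κ i) i (σ i)) * trop (((((κ i : ℕ) : ℝ)) * γ : ℝ) : Rmin)))
        = ∑ κ : Fin n → Fin (d + 1),
          (∏ i, trop (A (κ i) i (σ i))) * trop ((((∑ i, (κ i : ℕ) : ℕ) : ℝ) * γ : ℝ) : Rmin) :=
          Finset.sum_congr rfl fun κ _ => e2 κ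
      _ = ∑ m ∈ Finset.range (n * d + 1),
            ∑ κ ∈ (Finset.univ.filter fun κ : Fin n → Fin (d + 1) => ∑ i, (κ i : ℕ) = m),
              (∏ i, trop (A (κ i) i (σ i))) * trop ((((∑ i, (κ i : ℕ) : ℕ) : ℝ) * γ : ℝ) : Rmin) :=
          (Finset.sum_fiberwise_of_maps_to (fun κ _ => Finset.mem_range.mpr
            (Nat.lt_succ_of_le (sum_kappa_le κ))) _).symm
      _ = ∑ m ∈ Finset.range (n * d + 1),
            (∑ κ ∈ (Finset.univ.filter fun κ : Fin n → Fin (d + 1) => ∑ i, (κ i : ℕ) = m),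
              ∏ i, trop (A (κ i) i (σ i))) * trop (((m : ℝ) * γ : ℝ) : Rmin) := by
          refine Finset.sum_congr rfl fun m _ => ?_
          rw [Finset.sum_mul]
          refine Finset.sum_congr rfl fun κ hκ => ?_
          rw [(Finset.mem_filter.mp hκ).2]
    
  calc (∑ σ : Equiv.Perm (Fin n), ∏ i, trop (AhatMat A γ i (σ i)))
      = ∑ σ : Equiv.Perm (Fin n), ∑ m ∈ Finset.range (n * d + 1),
          (∑ κ ∈ (Finset.univ.filter fun κ : Fin n → Fin (d + 1) => ∑ i, (κ i : ℕ) = m),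
            ∏ i, trop (A (κ i) i (σ i))) * trop (((m : ℝ) * γ : ℝ) : Rmin) :=
        Finset.sum_congr rfl fun σ _ => key σ
    _ = ∑ m ∈ Finset.range (n * d + 1),
          trop (PAcoeff A m) * trop (((m : ℝ) * γ : ℝ) : Rmin) := by
        rw [Finset.sum_comm]
        refine Finset.sum_congr rfl fun m _ => ?_
        rw [trop_PAcoeff, Finset.sum_mul]
section Walks

variable {n : ℕ} (w : Fin n → Fin n → Rmin)

/-- Weight of the first `k` steps of the walk `v`. -/
def walkSum (v : ℕ → Fin n) (k : ℕ) : Rmin :=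
  ∑ t ∈ Finset.range k, w (v t) (v (t + 1))

/-- Remove the portion of a walk between positions `a` (exclusive) and `a + c` (inclusive). -/
def splice (v : ℕ → Fin n) (a c : ℕ) : ℕ → Fin n :=
  fun u => if u ≤ a then v u else v (u + c)

lemma splice_end {v : ℕ → Fin n} {a b m : ℕ} (hab : a < b) (hbm : b ≤ m)
    (hv : v a = v b) : splice v a (b - a) (m - (b - a)) = v m := by
  rcases eq_or_lt_of_le hbm with rfl | hlt
  · have h1 : b - (b - a) = a := by omega
    rw [h1, splice, if_pos le_rfl, hv]
  · have h2 : a < m - (b - a) := by omega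
    rw [splice, if_neg (by omega)]
    congr 1
    omega

lemma walkSum_split {v : ℕ → Fin n} {a b m : ℕ} (hab : a < b) (hbm : b ≤ m)
    (hv : v a = v b) :
    walkSum w v m = (∑ t ∈ Finset.Ico a b, w (v t) (v (t + 1)))
      + walkSum w (splice v a (b - a)) (m - (b - a)) := by
  have key : walkSum w (splice v a (b - a)) (m - (b - a)) =
      (∑ t ∈ Finset.Ico 0 a, w (v t) (v (t + 1)))
        + ∑ t ∈ Finset.Ico b m, w (v t) (v (t + 1)) := by
    have ham : a ≤ m - (b - a) := by omega
    rw [walkSum, Finset.range_eq_Ico,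
      ← Finset.sum_Ico_consecutive _ (Nat.zero_le a) ham]
    congr 1
    · refine Finset.sum_congr rfl fun t ht => ?_
      have ht' := Finset.mem_Ico.mp ht
      simp only [splice]
      rw [if_pos (by omega), if_pos (by omega)]
    · rw [Finset.sum_Ico_eq_sum_range, Finset.sum_Ico_eq_sum_range]
      have hlen : m - (b - a) - a = m - b := by omega
      rw [hlen]
      refine Finset.sum_congr rfl fun t ht => ?_
      rcases Nat.eq_zero_or_pos t with rfl | hpos
      · simp only [splice, Nat.add_zero]
        rw [if_pos le_rfl, if_neg (by omega), hv,
          show a + 1 + (b - a) = b + 1 by omega]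
      · simp only [splice]
        rw [if_neg (by omega), if_neg (by omega),
          show a + t + (b - a) = b + t by omega,
          show a + t + 1 + (b - a) = b + t + 1 by omega]
  rw [key, walkSum, Finset.range_eq_Ico,
    ← Finset.sum_Ico_consecutive _ (Nat.zero_le a) (le_of_lt (lt_of_lt_of_le hab hbm)),
    ← Finset.sum_Ico_consecutive _ (le_of_lt hab) hbm]
  abel

variable (hdiag : ∀ j, w j j = 0)
    (hperm : ∀ π : Equiv.Perm (Fin n), 0 ≤ ∑ j, w j (π j))

include hdiag hperm in
/-- Every closed walk has nonnegative weight. -/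
lemma closed_walk_nonneg : ∀ m, 0 < m → ∀ v : ℕ → Fin n, v 0 = v m →
    0 ≤ walkSum w v m := by
  intro m
  induction m using Nat.strong_induction_on with
  | _ m IH =>
  intro hm v hclosed
  by_cases hrep : ∃ s t, s < t ∧ t < m ∧ v s = v t
  · obtain ⟨s, t, hst, htm, hvst⟩ := hrep
    have h1 : 0 ≤ ∑ u ∈ Finset.Ico s t, w (v u) (v (u + 1)) := by
      have : (∑ u ∈ Finset.Ico s t, w (v u) (v (u + 1))) =
          walkSum w (fun u => v (s + u)) (t - s) := by
        rw [walkSum, Finset.sum_Ico_eq_sum_range]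
        exact Finset.sum_congr rfl fun u _ => rfl
      rw [this]
      exact IH (t - s) (by omega) (by omega) _ (by
        simp only [Nat.add_zero, show s + (t - s) = t by omega, hvst])
    have h2 : 0 ≤ walkSum w (splice v s (t - s)) (m - (t - s)) := by
      refine IH (m - (t - s)) (by omega) (by omega) _ ?_
      rw [splice_end hst (le_of_lt htm) hvst, ← hclosed, splice, if_pos (Nat.zero_le s)]
    rw [walkSum_split w hst (le_of_lt htm) hvst]
    exact add_nonneg h1 h2
  · -- v is injective on [0, m) : a simple cycle
    push_neg at hrep
    have hinj : ∀ s t, s < m → t < m → v s = v t → s = t := by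
      intro s t hs ht heq
      rcases lt_trichotomy s t with h | h | h
      · exact absurd heq (hrep s t h ht)
      · exact h
      · exact absurd heq.symm (hrep t s h hs)
    set l : List (Fin n) := (List.range m).map v with hl
    have hlen : l.length = m := by simp [hl]
    have hnodup : l.Nodup := by
      refine List.Nodup.map_on ?_ (List.nodup_range (n := m))
      intro s hs t ht heq
      exact hinj s t (List.mem_range.mp hs) (List.mem_range.mp ht) heq
    set π := l.formPerm with hπ
    have hfix : ∀ j, j ∉ l → π j = j := fun j hj => List.formPerm_apply_of_notMem hj
    have htofin : l.toFinset = Finset.image v (Finset.range m) := by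
      ext x
      simp [hl, List.mem_range]
    have hsum : (∑ j, w j (π j)) = walkSum w v m := by
      rw [show (∑ j, w j (π j)) = ∑ j ∈ l.toFinset, w j (π j) from
        (Finset.sum_subset (Finset.subset_univ _) (fun x _ hx => by
          rw [hfix x (by simpa using hx)]; exact hdiag x)).symm]
      rw [htofin, Finset.sum_image (fun s hs t ht heq =>
        hinj s t (Finset.mem_range.mp hs) (Finset.mem_range.mp ht) heq)]
      refine Finset.sum_congr rfl fun t ht => ?_
      have htm := Finset.mem_range.mp ht
      have hvt : v t = l[t]'(by omega) := by simp [hl]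
      have : π (v t) = v (t + 1) := by
        rw [hvt, hπ, List.formPerm_apply_getElem _ hnodup t (by omega)]
        simp only [hl, List.getElem_map, List.getElem_range]
        rcases eq_or_lt_of_le (Nat.succ_le_of_lt htm) with he | hlt
        · rw [hlen, ← he, Nat.mod_self, hclosed]
          congr 1
          omega
        · rw [hlen, Nat.mod_eq_of_lt hlt]
      rw [this]
    rw [← hsum]
    exact hperm π

end Walks
section Potential

variable {n : ℕ} (hn : 0 < n) (w : Fin n → Fin n → Rmin)

/-- Extend a tuple to a walk by reading indices modulo `n`. -/
def extW (hn : 0 < n) (ρ : Fin n → Fin n) (t : ℕ) : Fin n := ρ ⟨t % n, Nat.mod_lt t hn⟩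

/-- Bellman-Ford style potential: minimal weight of a walk of length `< n` ending at `j`. -/
def pot (j : Fin n) : Rmin :=
  (Finset.univ ×ˢ Finset.range n).inf fun p : (Fin n → Fin n) × ℕ =>
    walkSum w (extW hn p.1) p.2 + (if extW hn p.1 p.2 = j then (0 : Rmin) else ⊤)

lemma pot_le_walkSum (v : ℕ → Fin n) (k : ℕ) (hk : k < n) :
    pot hn w (v k) ≤ walkSum w v k := by
  have hmem : ((fun t : Fin n => v t.val, k) : (Fin n → Fin n) × ℕ) ∈
      Finset.univ ×ˢ Finset.range n := by
    simp [Finset.mem_product, hk]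
  have hext : ∀ t, t ≤ k → extW hn (fun t : Fin n => v t.val) t = v t := by
    intro t ht
    simp only [extW]
    congr 1
    exact Nat.mod_eq_of_lt (by omega)
  refine le_trans (Finset.inf_le hmem) ?_
  rw [hext k le_rfl, if_pos rfl, add_zero]
  exact le_of_eq (Finset.sum_congr rfl fun t ht => by
    rw [hext t (le_of_lt (Finset.mem_range.mp ht)),
      hext (t+1) (Finset.mem_range.mp ht)])

lemma pot_nonpos (j : Fin n) : pot hn w j ≤ 0 := by
  have := pot_le_walkSum hn w (fun _ => j) 0 hn
  simpa [walkSum] using this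

variable (hdiag : ∀ j, w j j = 0)
    (hperm : ∀ π : Equiv.Perm (Fin n), 0 ≤ ∑ j, w j (π j))

include hdiag hperm in
lemma pot_le_walkSum_n (v : ℕ → Fin n) : pot hn w (v n) ≤ walkSum w v n := by
  obtain ⟨a, b, hab, heq⟩ : ∃ a b : Fin (n+1), a < b ∧ v a.val = v b.val := by
    obtain ⟨x, y, hxy, heq⟩ := Fintype.exists_ne_map_eq_of_card_lt
      (fun t : Fin (n+1) => v t.val) (by simp)
    rcases lt_or_gt_of_ne hxy with h | h
    · exact ⟨x, y, h, heq⟩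
    · exact ⟨y, x, h, heq.symm⟩
  have hbn : (b : ℕ) ≤ n := Nat.lt_succ_iff.mp b.isLt
  have hab' : (a : ℕ) < b := hab
  rw [walkSum_split w hab' hbn heq]
  have h1 : 0 ≤ ∑ t ∈ Finset.Ico (a : ℕ) (b : ℕ), w (v t) (v (t + 1)) := by
    have : (∑ t ∈ Finset.Ico (a:ℕ) (b:ℕ), w (v t) (v (t + 1))) =
        walkSum w (fun u => v (a + u)) ((b:ℕ) - a) := by
      rw [walkSum, Finset.sum_Ico_eq_sum_range]
      exact Finset.sum_congr rfl fun u _ => rfl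
    rw [this]
    exact closed_walk_nonneg w hdiag hperm _ (by omega) _
      (by simp only [Nat.add_zero, show (a:ℕ) + ((b:ℕ) - a) = b by omega, heq])
  have h2 : pot hn w (v n) ≤ walkSum w (splice v a ((b:ℕ) - a)) (n - ((b:ℕ) - a)) := by
    rw [← splice_end hab' hbn heq]
    exact pot_le_walkSum hn w _ _ (by omega)
  exact le_trans h2 (le_add_of_nonneg_left h1)

include hdiag hperm in
lemma pot_closure (j j' : Fin n) : pot hn w j' ≤ pot hn w j + w j j' := by
  obtain ⟨⟨ρ, k⟩, hmem, heq⟩ := Finset.exists_mem_eq_inf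
    (Finset.univ ×ˢ Finset.range n)
    ⟨(fun _ => ⟨0, hn⟩, 0), by simp [Finset.mem_product, hn]⟩
    (fun p : (Fin n → Fin n) × ℕ =>
      walkSum w (extW hn p.1) p.2 + (if extW hn p.1 p.2 = j then (0 : Rmin) else ⊤))
  have hk : k < n := Finset.mem_range.mp (Finset.mem_product.mp hmem).2
  have hpot : pot hn w j = walkSum w (extW hn ρ) k
      + (if extW hn ρ k = j then (0 : Rmin) else ⊤) := heq
  clear heq
  by_cases hif : extW hn ρ k = j
  · rw [if_pos hif, add_zero] at hpot
    set v : ℕ → Fin n := fun t => if t ≤ k then extW hn ρ t else j' with hv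
    have hws : walkSum w v (k + 1) = walkSum w (extW hn ρ) k + w j j' := by
      rw [walkSum, Finset.sum_range_succ]
      congr 1
      · exact Finset.sum_congr rfl fun t ht => by
          have := Finset.mem_range.mp ht
          simp only [hv]
          rw [if_pos (by omega), if_pos (by omega)]
      · simp only [hv]
        rw [if_pos le_rfl, if_neg (by omega), hif]
    have hvk : v (k + 1) = j' := by
      simp only [hv]
      rw [if_neg (by omega)]
    have hle : pot hn w j' ≤ walkSum w v (k + 1) := by
      rcases eq_or_lt_of_le (Nat.succ_le_of_lt hk) with he | hlt
      · subst he
        rw [← hvk]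
        exact pot_le_walkSum_n hn w hdiag hperm v
      · rw [← hvk]
        exact pot_le_walkSum hn w v (k + 1) hlt
    rw [hws, ← hpot] at hle
    exact hle
  · rw [if_neg hif, add_top] at hpot
    rw [hpot, top_add]
    exact le_top

end Potential
section Hungarian

variable {n : ℕ}

lemma rmin_sum_eq_of_le {ι : Type*} {s : Finset ι} {f g : ι → Rmin}
    (hfg : ∀ i ∈ s, f i ≤ g i) (hsum : ∑ i ∈ s, f i = ∑ i ∈ s, g i)
    (htop : ∑ i ∈ s, g i ≠ ⊤) : ∀ i ∈ s, f i = g i := by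
  classical
  intro i hi
  by_contra hne
  have hlt : f i < g i := lt_of_le_of_ne (hfg i hi) hne
  have herase : ∑ j ∈ s.erase i, g j ≠ ⊤ := by
    intro h
    apply htop
    rw [← Finset.add_sum_erase s g hi, h, add_top]
  have hstrict : ∑ j ∈ s, f j < ∑ j ∈ s, g j := by
    rw [← Finset.add_sum_erase s f hi, ← Finset.add_sum_erase s g hi]
    calc f i + ∑ j ∈ s.erase i, f j ≤ f i + ∑ j ∈ s.erase i, g j :=
          add_le_add_right (Finset.sum_le_sum fun j hj => hfg j (Finset.mem_of_mem_erase hj)) _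
      _ < g i + ∑ j ∈ s.erase i, g j := WithTop.add_lt_add_right herase hlt
  exact absurd hsum (ne_of_lt hstrict)

lemma helperA {x c : ℝ} {y : Rmin} (h : (x : Rmin) ≤ y + ((c : ℝ) : Rmin)) :
    ((x - c : ℝ) : Rmin) ≤ y := by
  induction y using WithTop.recTopCoe with
  | top => exact le_top
  | coe r =>
    rw [← WithTop.coe_add, WithTop.coe_le_coe] at h
    exact WithTop.coe_le_coe.mpr (by linarith)

lemma helperB {x c : ℝ} {y : Rmin} (h : (x : Rmin) ≤ ((c : ℝ) : Rmin) + y) :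
    ((x - c : ℝ) : Rmin) ≤ y := by
  rw [add_comm] at h
  exact helperA h

lemma helperC {c : ℝ} {S : Rmin} (h : (c : Rmin) ≤ S) : 0 ≤ S + ((-c : ℝ) : Rmin) := by
  induction S using WithTop.recTopCoe with
  | top => rw [top_add]; exact le_top
  | coe r =>
    rw [← WithTop.coe_add]
    rw [WithTop.coe_le_coe] at h
    rw [show (0 : Rmin) = ((0 : ℝ) : Rmin) from rfl, WithTop.coe_le_coe]
    linarith

lemma mpPerm_exists_opt (B : Matrix (Fin n) (Fin n) Rmin) :
    ∃ σ : Equiv.Perm (Fin n), mpPerm B = ∑ i, B i (σ i) := by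
  obtain ⟨σ, _, h⟩ := Finset.exists_mem_eq_inf Finset.univ ⟨1, Finset.mem_univ 1⟩
    (fun σ : Equiv.Perm (Fin n) => ∑ i, B i (σ i))
  exact ⟨σ, h⟩

lemma mpPerm_le (B : Matrix (Fin n) (Fin n) Rmin) (σ : Equiv.Perm (Fin n)) :
    mpPerm B ≤ ∑ i, B i (σ i) := Finset.inf_le (Finset.mem_univ σ)

lemma exists_hungarian (hn : 0 < n) (B : Matrix (Fin n) (Fin n) Rmin) (hB : mpPerm B ≠ ⊤) :
    ∃ U V : Fin n → ℝ, (∀ i j, ((U i + V j : ℝ) : Rmin) ≤ B i j) ∧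
      (((∑ i, U i) + ∑ j, V j : ℝ) : Rmin) = mpPerm B := by
  obtain ⟨σ0, hσ0⟩ := mpPerm_exists_opt B
  have hfin : ∀ i, B i (σ0 i) ≠ ⊤ := by
    intro i hi
    exact hB (by rw [hσ0]; exact WithTop.sum_eq_top.mpr ⟨i, Finset.mem_univ i, hi⟩)
  have hfin' : ∀ j, B (σ0.symm j) j ≠ ⊤ := fun j => by
    have := hfin (σ0.symm j)
    rwa [Equiv.apply_symm_apply] at this
  choose b hb using fun j => WithTop.ne_top_iff_exists.mp (hfin' j)
  have hreidx : ∀ f : Fin n → Fin n → Rmin,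
      (∑ j, f (σ0.symm j) j) = ∑ i, f i (σ0 i) := by
    intro f
    exact (Fintype.sum_equiv σ0 _ _ fun i => by rw [Equiv.symm_apply_apply]).symm
  have hsb : ((∑ j, b j : ℝ) : Rmin) = mpPerm B := by
    rw [hσ0, WithTop.coe_sum]
    rw [← hreidx (fun i j => B i j)]
    exact Finset.sum_congr rfl fun j _ => hb j
  set w : Fin n → Fin n → Rmin :=
    fun j j' => B (σ0.symm j) j' + ((-(b j) : ℝ) : Rmin) with hw
  have hdiag : ∀ j, w j j = 0 := by
    intro j
    rw [hw]
    simp only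
    rw [← hb j, ← WithTop.coe_add]
    norm_num
  have hperm : ∀ π : Equiv.Perm (Fin n), 0 ≤ ∑ j, w j (π j) := by
    intro π
    have hsplit : (∑ j, w j (π j)) =
        (∑ j, B (σ0.symm j) (π j)) + (((-(∑ j, b j)) : ℝ) : Rmin) := by
      rw [hw]
      simp only
      rw [Finset.sum_add_distrib]
      congr 1
      rw [← WithTop.coe_sum, ← Finset.sum_neg_distrib]
    rw [hsplit]
    refine helperC ?_
    rw [hsb]
    calc mpPerm B ≤ ∑ i, B i ((σ0.trans π) i) := mpPerm_le B (σ0.trans π)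
      _ = ∑ j, B (σ0.symm j) (π j) := (hreidx fun i j => B i (π j)).symm
  have hpotne : ∀ j, pot hn w j ≠ ⊤ := by
    intro j h
    have := pot_nonpos hn w j
    rw [h] at this
    exact absurd this (by simp [top_le_iff])
  choose P hP using fun j => WithTop.ne_top_iff_exists.mp (hpotne j)
  refine ⟨fun i => b (σ0 i) - P (σ0 i), P, ?_, ?_⟩
  · intro i j
    have hcl := pot_closure hn w hdiag hperm (σ0 i) j
    rw [← hP j, ← hP (σ0 i), hw] at hcl
    simp only at hcl
    rw [Equiv.symm_apply_apply] at hcl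
    have h1 : ((P j : ℝ) : Rmin) ≤ (((P (σ0 i)) : ℝ) : Rmin) + (B i j + ((-(b (σ0 i)) : ℝ) : Rmin)) := hcl
    rw [← add_assoc] at h1
    have h2 := helperA h1
    have h3 := helperB h2
    show ((b (σ0 i) - P (σ0 i) + P j : ℝ) : Rmin) ≤ B i j
    rw [show b (σ0 i) - P (σ0 i) + P j = P j - -b (σ0 i) - P (σ0 i) by ring]
    exact h3
  · show (((∑ i, (b (σ0 i) - P (σ0 i))) + ∑ j, P j : ℝ) : Rmin) = mpPerm B
    rw [show (∑ i, (b (σ0 i) - P (σ0 i))) + ∑ j, P j = ∑ j, b j from by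
      rw [Finset.sum_sub_distrib, Equiv.sum_comp σ0 b, Equiv.sum_comp σ0 P]; ring]
    exact hsb

end Hungarian
section OptGraph

variable {n : ℕ}

lemma optArc_ne_top {B : Matrix (Fin n) (Fin n) Rmin} (hB : mpPerm B ≠ ⊤)
    {i j : Fin n} (h : OptArc B i j) : B i j ≠ ⊤ := by
  obtain ⟨σ, hσi, hσ⟩ := h
  intro htop
  apply hB
  rw [← hσ]
  exact WithTop.sum_eq_top.mpr ⟨i, Finset.mem_univ i, by rw [hσi, htop]⟩

/-- Key tropical lemma: a permutation all of whose arcs lie in `Opt(B)` is optimal. -/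
lemma sum_eq_mpPerm_of_optArc (hn : 0 < n) (B : Matrix (Fin n) (Fin n) Rmin)
    (hB : mpPerm B ≠ ⊤) (τ : Equiv.Perm (Fin n)) (hτ : ∀ i, OptArc B i (τ i)) :
    (∑ i, B i (τ i)) = mpPerm B := by
  obtain ⟨U, V, hUV, hsum⟩ := exists_hungarian hn B hB
  have hsumUV : ∀ π : Equiv.Perm (Fin n),
      (∑ l, ((U l + V (π l) : ℝ) : Rmin)) = (((∑ i, U i) + ∑ j, V j : ℝ) : Rmin) := by
    intro π
    rw [← WithTop.coe_sum]
    congr 1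
    rw [Finset.sum_add_distrib, Equiv.sum_comp π V]
  have hsat : ∀ i j, OptArc B i j → B i j = ((U i + V j : ℝ) : Rmin) := by
    rintro i j ⟨π, hπi, hπopt⟩
    have := rmin_sum_eq_of_le (s := Finset.univ)
      (f := fun l => ((U l + V (π l) : ℝ) : Rmin)) (g := fun l => B l (π l))
      (fun l _ => hUV l (π l))
      (by rw [hsumUV π, hsum, hπopt]) (by rw [hπopt]; exact hB) i (Finset.mem_univ i)
    rw [← hπi]
    exact this.symm
  calc (∑ i, B i (τ i)) = ∑ i, ((U i + V (τ i) : ℝ) : Rmin) :=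
        Finset.sum_congr rfl fun i _ => hsat i (τ i) (hτ i)
    _ = (((∑ i, U i) + ∑ j, V j : ℝ) : Rmin) := hsumUV τ
    _ = mpPerm B := hsum

end OptGraph
section ActiveChar

variable {n d : ℕ} (A : Fin (d + 1) → Matrix (Fin n) (Fin n) Rmin) (γ : ℝ)

lemma sum_coe_kappa (κ : Fin n → Fin (d + 1)) :
    (∑ i, ((((κ i : ℕ) : ℝ) * γ : ℝ) : Rmin)) =
      ((((∑ i, (κ i : ℕ) : ℕ) : ℝ) * γ : ℝ) : Rmin) := by
  rw [← WithTop.coe_sum]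
  congr 1
  push_cast
  rw [Finset.sum_mul]

lemma optK_ne_top (hfin : PAhat A γ ≠ ⊤) {k : Fin (d + 1)} {i j : Fin n}
    (h : OptK A γ k i j) : A k i j ≠ ⊤ := by
  have hB : mpPerm (AhatMat A γ) ≠ ⊤ := by rw [mpPerm_AhatMat]; exact hfin
  have hne := optArc_ne_top hB h.1
  intro htop
  have h2 := h.2
  rw [htop, top_add] at h2
  exact hne h2.symm

lemma active_of_valid (hfin : PAhat A γ ≠ ⊤) (hn : 0 < n)
    (σ : Equiv.Perm (Fin n)) (κ : Fin n → Fin (d + 1))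
    (hvalid : ∀ i, OptK A γ (κ i) (σ i) i) :
    (∑ i, (κ i : ℕ)) ∈ activeSet A γ := by
  set B := AhatMat A γ with hBdef
  have hB : mpPerm B ≠ ⊤ := by rw [hBdef, mpPerm_AhatMat]; exact hfin
  set m := ∑ i, (κ i : ℕ) with hm
  have hτ : ∀ l, OptArc B l (σ.symm l) := by
    intro l
    have := (hvalid (σ.symm l)).1
    rwa [Equiv.apply_symm_apply] at this
  have hopt : (∑ l, B l (σ.symm l)) = mpPerm B :=
    sum_eq_mpPerm_of_optArc hn B hB σ.symm hτ
  have hreidx : (∑ i, B (σ i) i) = ∑ l, B l (σ.symm l) :=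
    Fintype.sum_equiv σ (fun i => B (σ i) i) (fun l => B l (σ.symm l))
      fun i => by simp only [Equiv.symm_apply_apply]
  have hsum1 : (∑ i, (A (κ i) (σ i) i + ((((κ i : ℕ) : ℝ) * γ : ℝ) : Rmin))) =
      mpPerm B := by
    rw [← hopt, ← hreidx]
    exact Finset.sum_congr rfl fun i _ => (hvalid i).2
  have hsum2 : (∑ i, A (κ i) (σ i) i) + (((m : ℝ) * γ : ℝ) : Rmin) = mpPerm B := by
    rw [← hsum1, Finset.sum_add_distrib, sum_coe_kappa]
  have hcle : PAcoeff A m ≤ ∑ i, A (κ i) (σ i) i := by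
    rw [PAcoeff]
    refine le_trans (Finset.inf_le (Finset.mem_univ σ.symm)) ?_
    have hmem : (fun l => κ (σ.symm l)) ∈
        (Finset.univ.filter fun κ' : Fin n → Fin (d + 1) => ∑ i, (κ' i : ℕ) = m) := by
      rw [Finset.mem_filter]
      refine ⟨Finset.mem_univ _, ?_⟩
      rw [hm]
      exact (Fintype.sum_equiv σ (fun i => ((κ i : ℕ))) (fun l => ((κ (σ.symm l) : ℕ)))
        fun i => by simp only [Equiv.symm_apply_apply]).symm
    refine le_trans (Finset.inf_le hmem) (le_of_eq ?_)
    exact (Fintype.sum_equiv σ (fun i => A (κ i) (σ i) i)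
      (fun l => A (κ (σ.symm l)) l (σ.symm l))
      (fun i => by simp only [Equiv.symm_apply_apply])).symm
  have hmrange : m ∈ Finset.range (n * d + 1) :=
    Finset.mem_range.mpr (Nat.lt_succ_of_le (sum_kappa_le κ))
  have hup : PAhat A γ ≤ PAcoeff A m + (((m : ℝ) * γ : ℝ) : Rmin) :=
    Finset.inf_le hmrange
  have hdown : PAcoeff A m + (((m : ℝ) * γ : ℝ) : Rmin) ≤ PAhat A γ := by
    rw [← mpPerm_AhatMat A γ, ← hBdef, ← hsum2]
    exact add_le_add_left hcle _
  have heq : PAcoeff A m + (((m : ℝ) * γ : ℝ) : Rmin) = PAhat A γ :=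
    le_antisymm hdown hup
  rw [activeSet, Finset.mem_filter]
  refine ⟨hmrange, ?_, heq⟩
  intro htop
  rw [htop, top_add] at heq
  exact hfin heq.symm

lemma exists_valid_of_active (hfin : PAhat A γ ≠ ⊤) {m : ℕ}
    (hm : m ∈ activeSet A γ) :
    ∃ (σ : Equiv.Perm (Fin n)) (κ : Fin n → Fin (d + 1)),
      (∀ i, OptK A γ (κ i) (σ i) i) ∧ (∑ i, (κ i : ℕ)) = m := by
  set B := AhatMat A γ with hBdef
  rw [activeSet, Finset.mem_filter] at hm
  obtain ⟨hmrange, hne, heq⟩ := hm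
  obtain ⟨π0, _, h1⟩ := Finset.exists_mem_eq_inf (Finset.univ : Finset (Equiv.Perm (Fin n)))
    ⟨1, Finset.mem_univ 1⟩ (fun σ : Equiv.Perm (Fin n) =>
      (Finset.univ.filter fun κ : Fin n → Fin (d + 1) => ∑ i, (κ i : ℕ) = m).inf
        fun κ => ∑ i, A (κ i) i (σ i))
  rw [PAcoeff] at hne heq
  rw [h1] at hne heq
  have hfilne : ((Finset.univ.filter fun κ : Fin n → Fin (d + 1) =>
      ∑ i, (κ i : ℕ) = m)).Nonempty := by
    by_contra hemp
    rw [Finset.not_nonempty_iff_eq_empty] at hemp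
    rw [hemp, Finset.inf_empty] at hne
    exact hne rfl
  obtain ⟨κ0, hκ0mem, h2⟩ := Finset.exists_mem_eq_inf _ hfilne
    (fun κ : Fin n → Fin (d + 1) => ∑ i, A (κ i) i (π0 i))
  have hκ0sum : (∑ i, (κ0 i : ℕ)) = m := (Finset.mem_filter.mp hκ0mem).2
  rw [h2] at hne heq
  -- sandwich
  have hfle : ∀ i ∈ Finset.univ, B i (π0 i) ≤
      A (κ0 i) i (π0 i) + ((((κ0 i : ℕ) : ℝ) * γ : ℝ) : Rmin) := by
    intro i _
    exact Finset.inf_le (Finset.mem_univ (κ0 i))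
  have hgsum : (∑ i, (A (κ0 i) i (π0 i) + ((((κ0 i : ℕ) : ℝ) * γ : ℝ) : Rmin))) =
      mpPerm B := by
    rw [Finset.sum_add_distrib, sum_coe_kappa, hκ0sum, hBdef, mpPerm_AhatMat, ← heq]
  have hfge : mpPerm B ≤ ∑ i, B i (π0 i) := mpPerm_le B π0
  have hfle' : (∑ i, B i (π0 i)) ≤ ∑ i,
      (A (κ0 i) i (π0 i) + ((((κ0 i : ℕ) : ℝ) * γ : ℝ) : Rmin)) :=
    Finset.sum_le_sum hfle
  have hfeq : (∑ i, B i (π0 i)) = mpPerm B :=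
    le_antisymm (le_trans hfle' (le_of_eq hgsum)) hfge
  have hBne : mpPerm B ≠ ⊤ := by
    rw [hBdef, mpPerm_AhatMat]
    exact hfin
  have htight := rmin_sum_eq_of_le (s := Finset.univ)
    (f := fun i => B i (π0 i))
    (g := fun i => A (κ0 i) i (π0 i) + ((((κ0 i : ℕ) : ℝ) * γ : ℝ) : Rmin))
    hfle (by rw [hgsum, hfeq]) (by rw [hgsum]; exact hBne)
  refine ⟨π0.symm, fun i => κ0 (π0.symm i), fun i => ?_, ?_⟩
  · constructor
    · exact ⟨π0, π0.apply_symm_apply i, hfeq⟩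
    · have h := htight (π0.symm i) (Finset.mem_univ _)
      simp only [Equiv.apply_symm_apply] at h
      exact h.symm
  · rw [← hκ0sum]
    exact (Fintype.sum_equiv π0 (fun i => ((κ0 i : ℕ)))
      (fun l => ((κ0 (π0.symm l) : ℕ)))
      (fun i => by simp only [Equiv.symm_apply_apply])).symm

end ActiveChar
section DetExpansion

lemma sign_cast_ne_zero {α : Type*} (σ : Equiv.Perm α) [DecidableEq α] [Fintype α] :
    ((Equiv.Perm.sign σ : ℤ) : ℂ) ≠ 0 := by
  rcases Int.units_eq_one_or (Equiv.Perm.sign σ) with h | h <;> simp [h]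

/-- Coefficient of `X^m` in the determinant of a matrix of polynomials
`M i j = Σ_k c k i j X^k`. -/
lemma det_poly_coeff {n D : ℕ} (c : Fin D → Fin n → Fin n → ℂ) (m : ℕ) :
    (Matrix.det fun i j => ∑ k : Fin D, Polynomial.C (c k i j) * Polynomial.X ^ (k : ℕ)).coeff m
    = ∑ σ : Equiv.Perm (Fin n),
        ∑ κ ∈ Finset.univ.filter (fun κ : Fin n → Fin D => ∑ i, (κ i : ℕ) = m),
          ((Equiv.Perm.sign σ : ℤ) : ℂ) * ∏ i, c (κ i) (σ i) i := by
  rw [show (Matrix.det fun i j => ∑ k : Fin D, Polynomial.C (c k i j) * Polynomial.X ^ (k : ℕ)) =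
      Matrix.det (Matrix.of fun i j => ∑ k : Fin D, Polynomial.C (c k i j) * Polynomial.X ^ (k : ℕ))
      from rfl, Matrix.det_apply]
  simp only [Matrix.of_apply]
  rw [Polynomial.finset_sum_coeff]
  refine Finset.sum_congr rfl fun σ _ => ?_
  rw [Polynomial.coeff_smul]
  have hexp : (∏ i, ∑ k : Fin D, Polynomial.C (c k (σ i) i) * Polynomial.X ^ (k : ℕ))
      = ∑ κ ∈ Fintype.piFinset (fun _ : Fin n => (Finset.univ : Finset (Fin D))),
          Polynomial.C (∏ i, c (κ i) (σ i) i) * Polynomial.X ^ (∑ i, (κ i : ℕ)) := by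
    rw [Finset.prod_univ_sum]
    refine Finset.sum_congr rfl fun κ _ => ?_
    rw [Finset.prod_mul_distrib, ← map_prod, Finset.prod_pow_eq_pow_sum]
  rw [hexp, Fintype.piFinset_univ, Polynomial.finset_sum_coeff]
  have hcoeff : ∀ κ : Fin n → Fin D,
      (Polynomial.C (∏ i, c (κ i) (σ i) i) * Polynomial.X ^ (∑ i, (κ i : ℕ))).coeff m
      = if (∑ i, (κ i : ℕ)) = m then ∏ i, c (κ i) (σ i) i else 0 := by
    intro κ
    rw [Polynomial.coeff_C_mul, Polynomial.coeff_X_pow]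
    by_cases h : (∑ i, (κ i : ℕ)) = m
    · rw [if_pos h, if_pos h.symm, mul_one]
    · rw [if_neg h, if_neg (fun hh => h hh.symm), mul_zero]
  rw [Finset.smul_sum, Finset.sum_filter]
  refine Finset.sum_congr rfl fun κ _ => ?_
  rw [hcoeff κ]
  by_cases h : (∑ i, (κ i : ℕ)) = m
  · rw [if_pos h, if_pos h, Units.smul_def, zsmul_eq_mul]
  · rw [if_neg h, if_neg h, smul_zero]

end DetExpansion
section PhiSection

variable {n d : ℕ} (A : Fin (d + 1) → Matrix (Fin n) (Fin n) Rmin) (γ : ℝ)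

abbrev VarT (A : Fin (d + 1) → Matrix (Fin n) (Fin n) Rmin) : Type :=
  {p : Fin (d + 1) × Fin n × Fin n // A p.1 p.2.1 p.2.2 ≠ ⊤}

lemma monomial_sum_single {S' : Type*} {N : ℕ} (w : Fin N → S') (cc : ℂ) :
    (MvPolynomial.monomial (∑ i, Finsupp.single (w i) 1) cc : MvPolynomial S' ℂ)
      = MvPolynomial.C cc * ∏ i, MvPolynomial.X (w i) := by
  have key : ∀ s : Finset (Fin N),
      (MvPolynomial.monomial (∑ i ∈ s, Finsupp.single (w i) 1) cc : MvPolynomial S' ℂ)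
        = MvPolynomial.C cc * ∏ i ∈ s, MvPolynomial.X (w i) := by
    intro s
    induction s using Finset.cons_induction with
    | empty => simp
    | cons a s ha ih =>
      have hx : (MvPolynomial.X (w a) : MvPolynomial S' ℂ)
          = MvPolynomial.monomial (Finsupp.single (w a) 1) 1 := by
        rw [← MvPolynomial.X_pow_eq_monomial, pow_one]
      rw [Finset.sum_cons, Finset.prod_cons, hx, mul_left_comm, ← ih,
        MvPolynomial.monomial_mul, one_mul]
  exact key Finset.univ

open Classical in
noncomputable def PhiTerm (hfin : PAhat A γ ≠ ⊤) (σ : Equiv.Perm (Fin n))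
    (κ : Fin n → Fin (d + 1)) : MvPolynomial (VarT A) ℂ :=
  if h : ∀ i, OptK A γ (κ i) (σ i) i then
    MvPolynomial.monomial
      (∑ i, Finsupp.single (⟨(κ i, σ i, i), optK_ne_top A γ hfin (h i)⟩ : VarT A) 1)
      ((Equiv.Perm.sign σ : ℤ) : ℂ)
  else 0

noncomputable def Phi (hfin : PAhat A γ ≠ ⊤) (m : ℕ) : MvPolynomial (VarT A) ℂ :=
  ∑ σ : Equiv.Perm (Fin n),
    ∑ κ ∈ Finset.univ.filter (fun κ : Fin n → Fin (d + 1) => ∑ i, (κ i : ℕ) = m),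
      PhiTerm A γ hfin σ κ

lemma eval_Phi (hfin : PAhat A γ ≠ ⊤) (m : ℕ)
    (a : Fin (d + 1) → Matrix (Fin n) (Fin n) ℂ) :
    MvPolynomial.eval (fun p : VarT A => a p.1.1 p.1.2.1 p.1.2.2) (Phi A γ hfin m)
      = ((auxPencil a (OptK A γ)).det).coeff m := by
  have hdet : ((auxPencil a (OptK A γ)).det).coeff m
      = ∑ σ : Equiv.Perm (Fin n),
          ∑ κ ∈ Finset.univ.filter (fun κ : Fin n → Fin (d + 1) => ∑ i, (κ i : ℕ) = m),
            ((Equiv.Perm.sign σ : ℤ) : ℂ) * ∏ i, restrictG (a (κ i)) (OptK A γ (κ i)) (σ i) i :=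
    det_poly_coeff (fun k i j => restrictG (a k) (OptK A γ k) i j) m
  rw [hdet, Phi, map_sum]
  refine Finset.sum_congr rfl fun σ _ => ?_
  rw [map_sum]
  refine Finset.sum_congr rfl fun κ _ => ?_
  rw [PhiTerm]
  by_cases h : ∀ i, OptK A γ (κ i) (σ i) i
  · rw [dif_pos h, monomial_sum_single, map_mul, MvPolynomial.eval_C, map_prod]
    congr 1
    refine Finset.prod_congr rfl fun i _ => ?_
    rw [MvPolynomial.eval_X]
    show a (κ i) (σ i) i = restrictG (a (κ i)) (OptK A γ (κ i)) (σ i) i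
    rw [restrictG, if_pos (h i)]
  · rw [dif_neg h, map_zero]
    push_neg at h
    obtain ⟨i, hi⟩ := h
    rw [Finset.prod_eq_zero (Finset.mem_univ i) (by rw [restrictG, if_neg hi]), mul_zero]

lemma Phi_ne_zero (hfin : PAhat A γ ≠ ⊤) {m : ℕ} (hm : m ∈ activeSet A γ) :
    Phi A γ hfin m ≠ 0 := by
  obtain ⟨σ0, κ0, hvalid0, hsum0⟩ := exists_valid_of_active A γ hfin hm
  set v0 : Fin n → VarT A :=
    fun i => ⟨(κ0 i, σ0 i, i), optK_ne_top A γ hfin (hvalid0 i)⟩ with hv0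
  set μ0 : VarT A →₀ ℕ := ∑ i, Finsupp.single (v0 i) 1 with hμ0
  have hkey : ∀ (σ : Equiv.Perm (Fin n)) (κ : Fin n → Fin (d + 1))
      (h : ∀ i, OptK A γ (κ i) (σ i) i),
      (∑ i, Finsupp.single (⟨(κ i, σ i, i), optK_ne_top A γ hfin (h i)⟩ : VarT A) 1) = μ0
      → σ = σ0 ∧ κ = κ0 := by
    intro σ κ h he
    set v : Fin n → VarT A :=
      fun i => ⟨(κ i, σ i, i), optK_ne_top A γ hfin (h i)⟩ with hv
    have hpt : ∀ i0, κ i0 = κ0 i0 ∧ σ i0 = σ0 i0 := by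
      intro i0
      have happ := DFunLike.congr_fun he (v0 i0)
      rw [hμ0] at happ
      rw [Finsupp.finset_sum_apply, Finsupp.finset_sum_apply] at happ
      have hrhs : (∑ i, (Finsupp.single (v0 i) 1 : VarT A →₀ ℕ) (v0 i0)) ≠ 0 := by
        intro hz
        rw [Finset.sum_eq_zero_iff] at hz
        have := hz i0 (Finset.mem_univ i0)
        rw [Finsupp.single_apply, if_pos rfl] at this
        exact one_ne_zero this
      have hex : ∃ i, v i = v0 i0 := by
        by_contra hc
        push_neg at hc
        apply hrhs
        rw [← happ]
        refine Finset.sum_eq_zero fun i _ => ?_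
        rw [Finsupp.single_apply, if_neg (hc i)]
      obtain ⟨i, hi⟩ := hex
      have hval : ((κ i, σ i, i) : Fin (d + 1) × Fin n × Fin n) = (κ0 i0, σ0 i0, i0) :=
        congrArg Subtype.val hi
      have h3 : i = i0 := (Prod.ext_iff.mp (Prod.ext_iff.mp hval).2).2
      subst h3
      exact ⟨(Prod.ext_iff.mp hval).1, (Prod.ext_iff.mp (Prod.ext_iff.mp hval).2).1⟩
    exact ⟨Equiv.ext fun i => (hpt i).2, funext fun i => (hpt i).1⟩
  intro hzero
  have hcoeff : MvPolynomial.coeff μ0 (Phi A γ hfin m) = ((Equiv.Perm.sign σ0 : ℤ) : ℂ) := by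
    rw [Phi, MvPolynomial.coeff_sum]
    rw [Finset.sum_eq_single_of_mem σ0 (Finset.mem_univ σ0) ?_]
    · rw [MvPolynomial.coeff_sum]
      rw [Finset.sum_eq_single_of_mem κ0
        (Finset.mem_filter.mpr ⟨Finset.mem_univ κ0, hsum0⟩) ?_]
      · rw [PhiTerm, dif_pos hvalid0, MvPolynomial.coeff_monomial, if_pos rfl]
      · intro κ hκ hne
        rw [PhiTerm]
        by_cases h : ∀ i, OptK A γ (κ i) (σ0 i) i
        · rw [dif_pos h, MvPolynomial.coeff_monomial, if_neg ?_]
          intro he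
          exact hne (hkey σ0 κ h he).2
        · rw [dif_neg h, MvPolynomial.coeff_zero]
    · intro σ hσ hne
      rw [MvPolynomial.coeff_sum]
      refine Finset.sum_eq_zero fun κ hκ => ?_
      rw [PhiTerm]
      by_cases h : ∀ i, OptK A γ (κ i) (σ i) i
      · rw [dif_pos h, MvPolynomial.coeff_monomial, if_neg ?_]
        intro he
        exact hne (hkey σ κ h he).1
      · rw [dif_neg h, MvPolynomial.coeff_zero]
  rw [hzero, MvPolynomial.coeff_zero] at hcoeff
  exact sign_cast_ne_zero σ0 hcoeff.symm

end PhiSection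
section Slopes

variable {n d : ℕ} (A : Fin (d + 1) → Matrix (Fin n) (Fin n) Rmin)

/-- Exponents with finite coefficient in `P_A`. -/
def Fset : Finset ℕ := (Finset.range (n * d + 1)).filter fun m => PAcoeff A m ≠ ⊤

/-- Real value of the coefficient `P_m` (junk value if infinite). -/
def pc (m : ℕ) : ℝ := WithTop.untopD (0 : ℝ) (PAcoeff A m)

/-- The affine function `x ↦ P_m + m x`. -/
def ell (m : ℕ) (x : ℝ) : ℝ := pc A m + m * x

lemma pc_spec {m : ℕ} (hm : m ∈ Fset A) : PAcoeff A m = ((pc A m : ℝ) : Rmin) := by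
  have hne : PAcoeff A m ≠ ⊤ := by
    have := hm
    simp only [Fset, Finset.mem_filter] at this
    exact this.2
  obtain ⟨r, hr⟩ := WithTop.ne_top_iff_exists.mp hne
  rw [pc, ← hr, WithTop.untopD_coe]

lemma PAhat_eq (hF : (Fset A).Nonempty) (x : ℝ) :
    PAhat A x = ((((Fset A).inf' hF (fun m => ell A m x) : ℝ)) : Rmin) := by
  rw [Finset.coe_inf', PAhat]
  apply le_antisymm
  · refine Finset.le_inf fun m hm => ?_
    refine le_trans (Finset.inf_le (Finset.mem_of_mem_filter m hm)) (le_of_eq ?_)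
    rw [pc_spec A hm]
    show ((pc A m : ℝ) : Rmin) + (((m : ℝ) * x : ℝ) : Rmin) = _
    rw [← WithTop.coe_add]
    rfl
  · refine Finset.le_inf fun m hm => ?_
    by_cases hmf : m ∈ Fset A
    · refine le_trans (Finset.inf_le hmf) (le_of_eq ?_)
      show _ = PAcoeff A m + (((m : ℝ) * x : ℝ) : Rmin)
      rw [pc_spec A hmf, ← WithTop.coe_add]
      rfl
    · have : PAcoeff A m = ⊤ := by
        by_contra hne
        exact hmf (Finset.mem_filter.mpr ⟨hm, hne⟩)
      rw [this, top_add]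
      exact le_top
lemma active_iff (hF : (Fset A).Nonempty) (x : ℝ) (m : ℕ) :
    m ∈ activeSet A x ↔ m ∈ Fset A ∧
      ell A m x = (Fset A).inf' hF (fun m' => ell A m' x) := by
  simp only [activeSet, Fset, Finset.mem_filter]
  constructor
  · rintro ⟨hr, hne, heq⟩
    refine ⟨⟨hr, hne⟩, ?_⟩
    have hmf : m ∈ Fset A := Finset.mem_filter.mpr ⟨hr, hne⟩
    rw [pc_spec A hmf] at heq
    rw [PAhat_eq A hF] at heq
    have : ((pc A m + (m : ℝ) * x : ℝ) : Rmin) =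
        (((Fset A).inf' hF (fun m' => ell A m' x) : ℝ) : Rmin) := by
      rw [← heq, ← WithTop.coe_add]
    exact WithTop.coe_inj.mp this
  · rintro ⟨⟨hr, hne⟩, heq⟩
    refine ⟨hr, hne, ?_⟩
    have hmf : m ∈ Fset A := Finset.mem_filter.mpr ⟨hr, hne⟩
    rw [pc_spec A hmf, PAhat_eq A hF, ← WithTop.coe_add]
    exact WithTop.coe_inj.mpr heq

lemma active_nonempty (hF : (Fset A).Nonempty) (x : ℝ) : (activeSet A x).Nonempty := by
  obtain ⟨m, hm, heq⟩ := Finset.exists_mem_eq_inf' hF (fun m' => ell A m' x)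
  exact ⟨m, (active_iff A hF x m).mpr ⟨hm, heq.symm⟩⟩

/-- Smallest active slope (the right derivative of `P̂_A`). -/
def loSlope (x : ℝ) : ℕ := ((activeSet A x).min).getD 0

/-- Largest active slope (the left derivative of `P̂_A`). -/
def hiSlope (x : ℝ) : ℕ := (activeSet A x).sup id

lemma loSlope_eq_min' {x : ℝ} (hne : (activeSet A x).Nonempty) :
    loSlope A x = (activeSet A x).min' hne := by
  rw [loSlope, ← Finset.coe_min' hne]
  rfl

lemma loSlope_mem {x : ℝ} (hne : (activeSet A x).Nonempty) :
    loSlope A x ∈ activeSet A x := by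
  rw [loSlope_eq_min' A hne]
  exact Finset.min'_mem _ hne

lemma loSlope_le {x : ℝ} {m : ℕ} (hm : m ∈ activeSet A x) :
    loSlope A x ≤ m := by
  rw [loSlope_eq_min' A ⟨m, hm⟩]
  exact Finset.min'_le _ m hm

lemma hiSlope_mem {x : ℝ} (hne : (activeSet A x).Nonempty) :
    hiSlope A x ∈ activeSet A x := by
  rw [hiSlope, ← Finset.sup'_eq_sup hne, ← Finset.max'_eq_sup']
  exact Finset.max'_mem _ hne

lemma le_hiSlope {x : ℝ} {m : ℕ} (hm : m ∈ activeSet A x) :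
    m ≤ hiSlope A x := Finset.le_sup (f := id) hm

lemma cornerMult_eq {x : ℝ} : cornerMult A x = hiSlope A x - loSlope A x := rfl

/-- Slopes decrease from left to right. -/
lemma slope_antitone (hF : (Fset A).Nonempty) {x y : ℝ} (hxy : x < y) {m m' : ℕ}
    (hm : m ∈ activeSet A x) (hm' : m' ∈ activeSet A y) : m' ≤ m := by
  rw [active_iff A hF] at hm hm'
  have h1 : ell A m x ≤ ell A m' x := hm.2 ▸ Finset.inf'_le _ hm'.1
  have h2 : ell A m' y ≤ ell A m y := hm'.2 ▸ Finset.inf'_le _ hm.1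
  rw [ell, ell] at h1 h2
  by_contra hc
  push_neg at hc
  have : (m : ℝ) < m' := by exact_mod_cast hc
  nlinarith

lemma mem_Fset_of_active (hF : (Fset A).Nonempty) {x : ℝ} {m : ℕ}
    (hm : m ∈ activeSet A x) : m ∈ Fset A := ((active_iff A hF x m).mp hm).1

lemma not_corner_singleton {x : ℝ} (hF : (Fset A).Nonempty)
    (hnc : ¬IsFiniteCorner A x) : activeSet A x = {loSlope A x} := by
  have hne := active_nonempty A hF x
  ext m
  rw [Finset.mem_singleton]
  constructor
  · intro hm
    by_contra hne'
    exact hnc ⟨m, hm, loSlope A x, loSlope_mem A hne, hne'⟩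
  · rintro rfl
    exact loSlope_mem A hne

/-- If one slope is strictly better than all others at `x`, it is the only active slope. -/
lemma active_singleton_of_strict (hF : (Fset A).Nonempty) {x : ℝ} {s : ℕ}
    (hs : s ∈ Fset A) (hstrict : ∀ m ∈ Fset A, m ≠ s → ell A s x < ell A m x) :
    activeSet A x = {s} := by
  have hsactive : ell A s x = (Fset A).inf' hF (fun m' => ell A m' x) := by
    apply le_antisymm
    · obtain ⟨m, hm, heq⟩ := Finset.exists_mem_eq_inf' hF (fun m' => ell A m' x)
      rw [heq]
      by_cases hms : m = s
      · rw [hms]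
      · exact le_of_lt (hstrict m hm hms)
    · exact Finset.inf'_le _ hs
  ext m
  rw [Finset.mem_singleton, active_iff A hF]
  constructor
  · rintro ⟨hmF, hm⟩
    by_contra hne
    have := hstrict m hmF hne
    rw [hm, hsactive] at this
    exact lt_irrefl _ this
  · rintro rfl
    exact ⟨hs, hsactive⟩

end Slopes
section Corners

variable {n d : ℕ} (A : Fin (d + 1) → Matrix (Fin n) (Fin n) Rmin)

lemma mem_Fset_le {m : ℕ} (hm : m ∈ Fset A) : m ≤ n * d := by
  have := (Finset.mem_filter.mp hm).1
  exact Nat.lt_succ_iff.mp (Finset.mem_range.mp this)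

lemma loc_right (hF : (Fset A).Nonempty) (z : ℝ) :
    ∃ δ > 0, ∀ z', z < z' → z' < z + δ → activeSet A z' = {loSlope A z} := by
  have hne := active_nonempty A hF z
  set s := loSlope A z with hs
  have hsmem := loSlope_mem A hne
  have hsF := mem_Fset_of_active A hF hsmem
  set S := (Fset A).filter (fun m => m ∉ activeSet A z) with hSdef
  have hgap : ∀ m ∈ S, ell A s z < ell A m z := by
    intro m hm
    rw [hSdef, Finset.mem_filter] at hm
    have hsval := ((active_iff A hF z s).mp hsmem).2
    have hle : ell A s z ≤ ell A m z := by
      rw [hsval]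
      exact Finset.inf'_le _ hm.1
    rcases lt_or_eq_of_le hle with h | h
    · exact h
    · exfalso
      exact hm.2 ((active_iff A hF z m).mpr ⟨hm.1, by rw [← h, hsval]⟩)
  set δ : ℝ := if h : S.Nonempty then
      min 1 (S.inf' h (fun m => (ell A m z - ell A s z) / ((n : ℝ) * d + 1))) else 1 with hδdef
  have hδpos : 0 < δ := by
    rw [hδdef]
    split_ifs with h
    · refine lt_min one_pos ?_
      rw [Finset.lt_inf'_iff]
      intro m hm
      exact div_pos (by linarith [hgap m hm]) (by positivity)
    · exact one_pos
  refine ⟨δ, hδpos, fun z' h1 h2 => ?_⟩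
  refine active_singleton_of_strict A hF hsF ?_
  intro m hmF hms
  have hmnd : (m : ℝ) ≤ (n : ℝ) * d := by exact_mod_cast mem_Fset_le A hmF
  have hsnd : (s : ℝ) ≤ (n : ℝ) * d := by exact_mod_cast mem_Fset_le A hsF
  by_cases hma : m ∈ activeSet A z
  · have hsm : s < m := lt_of_le_of_ne (loSlope_le A hma) (Ne.symm hms)
    have hsmr : (s : ℝ) < m := by exact_mod_cast hsm
    have heqz : ell A m z = ell A s z := by
      rw [((active_iff A hF z m).mp hma).2, ((active_iff A hF z s).mp hsmem).2]
    rw [ell, ell] at heqz ⊢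
    nlinarith
  · have hmS : m ∈ S := by
      rw [hSdef, Finset.mem_filter]
      exact ⟨hmF, hma⟩
    have hSne : S.Nonempty := ⟨m, hmS⟩
    have hδle : δ ≤ (ell A m z - ell A s z) / ((n : ℝ) * d + 1) := by
      rw [hδdef, dif_pos hSne]
      exact le_trans (min_le_right _ _) (Finset.inf'_le _ hmS)
    have key2 : (z' - z) * ((n : ℝ) * d + 1) < ell A m z - ell A s z := by
      rw [← lt_div_iff₀ (by positivity)]
      linarith
    have key : (-((n : ℝ) * d + 1)) * (z' - z) ≤ ((m : ℝ) - s) * (z' - z) := by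
      refine mul_le_mul_of_nonneg_right ?_ (by linarith)
      have : (0 : ℝ) ≤ m := Nat.cast_nonneg m
      linarith
    have expand : pc A m + (m : ℝ) * z' - (pc A s + (s : ℝ) * z')
        = (ell A m z - ell A s z) + ((m : ℝ) - s) * (z' - z) := by
      rw [ell, ell]
      ring
    rw [ell, ell]
    nlinarith [key, key2, expand]

lemma loc_left (hF : (Fset A).Nonempty) (z : ℝ) :
    ∃ δ > 0, ∀ z', z - δ < z' → z' < z → activeSet A z' = {hiSlope A z} := by
  have hne := active_nonempty A hF z
  set s := hiSlope A z with hs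
  have hsmem := hiSlope_mem A hne
  have hsF := mem_Fset_of_active A hF hsmem
  set S := (Fset A).filter (fun m => m ∉ activeSet A z) with hSdef
  have hgap : ∀ m ∈ S, ell A s z < ell A m z := by
    intro m hm
    rw [hSdef, Finset.mem_filter] at hm
    have hsval := ((active_iff A hF z s).mp hsmem).2
    have hle : ell A s z ≤ ell A m z := by
      rw [hsval]
      exact Finset.inf'_le _ hm.1
    rcases lt_or_eq_of_le hle with h | h
    · exact h
    · exact absurd ((active_iff A hF z m).mpr ⟨hm.1, by rw [← h, hsval]⟩) hm.2
  set δ : ℝ := if h : S.Nonempty then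
      min 1 (S.inf' h (fun m => (ell A m z - ell A s z) / ((n : ℝ) * d + 1))) else 1 with hδdef
  have hδpos : 0 < δ := by
    rw [hδdef]
    split_ifs with h
    · refine lt_min one_pos ?_
      rw [Finset.lt_inf'_iff]
      intro m hm
      exact div_pos (by linarith [hgap m hm]) (by positivity)
    · exact one_pos
  refine ⟨δ, hδpos, fun z' h1 h2 => ?_⟩
  refine active_singleton_of_strict A hF hsF ?_
  intro m hmF hms
  have hmnd : (m : ℝ) ≤ (n : ℝ) * d := by exact_mod_cast mem_Fset_le A hmF
  have hsnd : (s : ℝ) ≤ (n : ℝ) * d := by exact_mod_cast mem_Fset_le A hsF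
  by_cases hma : m ∈ activeSet A z
  · have hms' : m < s := lt_of_le_of_ne (le_hiSlope A hma) hms
    have hmsr : (m : ℝ) < s := by exact_mod_cast hms'
    have heqz : ell A m z = ell A s z := by
      rw [((active_iff A hF z m).mp hma).2, ((active_iff A hF z s).mp hsmem).2]
    rw [ell, ell] at heqz ⊢
    nlinarith
  · have hmS : m ∈ S := by
      rw [hSdef, Finset.mem_filter]
      exact ⟨hmF, hma⟩
    have hSne : S.Nonempty := ⟨m, hmS⟩
    have hδle : δ ≤ (ell A m z - ell A s z) / ((n : ℝ) * d + 1) := by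
      rw [hδdef, dif_pos hSne]
      exact le_trans (min_le_right _ _) (Finset.inf'_le _ hmS)
    have key2 : (z - z') * ((n : ℝ) * d + 1) < ell A m z - ell A s z := by
      rw [← lt_div_iff₀ (by positivity)]
      linarith
    have key : (-((n : ℝ) * d + 1)) * (z - z') ≤ ((s : ℝ) - m) * (z - z') := by
      refine mul_le_mul_of_nonneg_right ?_ (by linarith)
      have : (0 : ℝ) ≤ s := Nat.cast_nonneg s
      linarith
    have expand : pc A m + (m : ℝ) * z' - (pc A s + (s : ℝ) * z')
        = (ell A m z - ell A s z) + ((s : ℝ) - m) * (z - z') := by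
      rw [ell, ell]
      ring
    rw [ell, ell]
    nlinarith [key, key2, expand]

lemma PAval_mem_Fset (hF : (Fset A).Nonempty) : PAval A ∈ Fset A := by
  obtain ⟨m0, hm0⟩ := hF
  have hm0' : PAcoeff A m0 ≠ ⊤ := (Finset.mem_filter.mp hm0).2
  have hsne : {m | PAcoeff A m ≠ ⊤}.Nonempty := ⟨m0, hm0'⟩
  have hmem : PAcoeff A (PAval A) ≠ ⊤ := Nat.sInf_mem hsne
  have hle : PAval A ≤ m0 := Nat.sInf_le hm0'
  refine Finset.mem_filter.mpr ⟨Finset.mem_range.mpr ?_, hmem⟩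
  have := mem_Fset_le A hm0
  omega

lemma PAval_le (hF : (Fset A).Nonempty) {m : ℕ} (hm : m ∈ Fset A) : PAval A ≤ m :=
  Nat.sInf_le (Finset.mem_filter.mp hm).2

lemma exists_tail (hF : (Fset A).Nonempty) :
    ∃ Y : ℝ, ∀ z, Y < z → activeSet A z = {PAval A} := by
  set v := PAval A with hv
  have hvF := PAval_mem_Fset A hF
  set S := (Fset A).filter (· ≠ v) with hSdef
  set Y : ℝ := if h : S.Nonempty then
    S.sup' h (fun m => (pc A v - pc A m) / ((m : ℝ) - v)) else 0 with hYdef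
  refine ⟨Y, fun z hz => ?_⟩
  refine active_singleton_of_strict A hF hvF ?_
  intro m hmF hmne
  have hvm : v < m := lt_of_le_of_ne (PAval_le A hF hmF) (Ne.symm hmne)
  have hvmr : (v : ℝ) < m := by exact_mod_cast hvm
  have hmS : m ∈ S := by
    rw [hSdef, Finset.mem_filter]
    exact ⟨hmF, hmne⟩
  have hY : (pc A v - pc A m) / ((m : ℝ) - v) ≤ Y := by
    rw [hYdef, dif_pos ⟨m, hmS⟩]
    exact Finset.le_sup' (fun m => (pc A v - pc A m) / ((m : ℝ) - v)) hmS
  have hth : (pc A v - pc A m) / ((m : ℝ) - v) < z := lt_of_le_of_lt hY hz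
  rw [div_lt_iff₀ (by linarith)] at hth
  rw [ell, ell]
  nlinarith

lemma not_corner_of_tail (hF : (Fset A).Nonempty) {Y z : ℝ}
    (hY : ∀ z, Y < z → activeSet A z = {PAval A}) (hz : Y < z) :
    ¬IsFiniteCorner A z := by
  rintro ⟨m₁, hm₁, m₂, hm₂, hne⟩
  rw [hY z hz, Finset.mem_singleton] at hm₁ hm₂
  exact hne (hm₁.trans hm₂.symm)

lemma loSlope_const (hF : (Fset A).Nonempty) {z₀ z₁ : ℝ} (h01 : z₀ ≤ z₁)
    (hnc : ∀ z, z₀ ≤ z → z ≤ z₁ → ¬IsFiniteCorner A z) :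
    loSlope A z₀ = loSlope A z₁ := by
  set T := {z | z₀ ≤ z ∧ z ≤ z₁ ∧ loSlope A z = loSlope A z₀} with hT
  have hT0 : z₀ ∈ T := ⟨le_rfl, h01, rfl⟩
  have hTne : T.Nonempty := ⟨z₀, hT0⟩
  have hTbdd : BddAbove T := ⟨z₁, fun z hz => hz.2.1⟩
  set c := sSup T with hc
  have hc0 : z₀ ≤ c := le_csSup hTbdd hT0
  have hc1 : c ≤ z₁ := csSup_le hTne fun z hz => hz.2.1
  obtain ⟨δR, hδR, hR⟩ := loc_right A hF c
  obtain ⟨δL, hδL, hL⟩ := loc_left A hF c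
  have hsing : activeSet A c = {loSlope A c} :=
    not_corner_singleton A hF (hnc c hc0 hc1)
  have hlc : loSlope A c = loSlope A z₀ := by
    obtain ⟨z, hzT, hzgt⟩ := exists_lt_of_lt_csSup hTne (show c - δL < c by linarith)
    rcases eq_or_lt_of_le (le_csSup hTbdd hzT) with he | hlt
    · rw [hc, ← he]
      exact hzT.2.2
    · have hactz := hL z hzgt hlt
      have h1 : loSlope A z = hiSlope A c := by
        have hmem := loSlope_mem A (active_nonempty A hF z)
        rw [hactz, Finset.mem_singleton] at hmem
        exact hmem
      have h2 : hiSlope A c = loSlope A c := by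
        have hmem := hiSlope_mem A (active_nonempty A hF c)
        rw [hsing, Finset.mem_singleton] at hmem
        exact hmem
      rw [← h2, ← h1]
      exact hzT.2.2
  rcases eq_or_lt_of_le hc1 with he | hlt
  · rw [← hlc, he]
  · exfalso
    set z' := min (c + δR / 2) ((c + z₁) / 2) with hz'
    have hz'1 : c < z' := lt_min (by linarith) (by linarith)
    have hz'2 : z' < c + δR := lt_of_le_of_lt (min_le_left _ _) (by linarith)
    have hz'3 : z' ≤ z₁ := le_trans (min_le_right _ _) (by linarith)
    have hactz' := hR z' hz'1 hz'2
    have h1 : loSlope A z' = loSlope A c := by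
      have hmem := loSlope_mem A (active_nonempty A hF z')
      rw [hactz', Finset.mem_singleton] at hmem
      exact hmem
    have hz'T : z' ∈ T := ⟨by linarith, hz'3, by rw [h1, hlc]⟩
    exact absurd (le_csSup hTbdd hz'T) (not_le.mpr hz'1)

lemma loSlope_eq_hiSlope (hF : (Fset A).Nonempty) {x y : ℝ} (hxy : x < y)
    (hnc : ∀ z, x < z → z < y → ¬IsFiniteCorner A z) :
    loSlope A x = hiSlope A y := by
  obtain ⟨δ0, hδ0, h0⟩ := loc_right A hF x
  obtain ⟨δ1, hδ1, h1⟩ := loc_left A hF y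
  set z₀ := x + min δ0 (y - x) / 2 with hz₀
  set z₁ := y - min δ1 (y - x) / 2 with hz₁
  have hmin0 : 0 < min δ0 (y - x) := lt_min hδ0 (by linarith)
  have hmin1 : 0 < min δ1 (y - x) := lt_min hδ1 (by linarith)
  have hxz₀ : x < z₀ := by rw [hz₀]; linarith
  have hz₀δ : z₀ < x + δ0 := by
    rw [hz₀]
    have := min_le_left δ0 (y - x)
    linarith
  have hz₀y : z₀ < y := by
    rw [hz₀]
    have := min_le_right δ0 (y - x)
    linarith
  have hz₁x : x < z₁ := by
    rw [hz₁]
    have := min_le_right δ1 (y - x)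
    linarith
  have hz₁y : z₁ < y := by rw [hz₁]; linarith
  have hz₁δ : y - δ1 < z₁ := by
    rw [hz₁]
    have := min_le_left δ1 (y - x)
    linarith
  have ha0 : activeSet A z₀ = {loSlope A x} := h0 z₀ hxz₀ hz₀δ
  have hlo0 : loSlope A z₀ = loSlope A x := by
    have hmem := loSlope_mem A (active_nonempty A hF z₀)
    rw [ha0, Finset.mem_singleton] at hmem
    exact hmem
  rcases le_or_gt z₀ z₁ with hle | hlt
  · have ha1 : activeSet A z₁ = {hiSlope A y} := h1 z₁ hz₁δ hz₁y
    have hlo1 : loSlope A z₁ = hiSlope A y := by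
      have hmem := loSlope_mem A (active_nonempty A hF z₁)
      rw [ha1, Finset.mem_singleton] at hmem
      exact hmem
    have hconst := loSlope_const A hF hle
      (fun z hz1 hz2 => hnc z (lt_of_lt_of_le hxz₀ hz1) (lt_of_le_of_lt hz2 hz₁y))
    rw [← hlo0, hconst, hlo1]
  · have ha0' : activeSet A z₀ = {hiSlope A y} := h1 z₀ (by linarith) hz₀y
    have := ha0.symm.trans ha0'
    exact Finset.singleton_injective this

lemma loSlope_telescope (hF : (Fset A).Nonempty) (cs : Finset ℝ) :
    ∀ x : ℝ, (∀ z, z ∈ cs ↔ x < z ∧ IsFiniteCorner A z) →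
      loSlope A x = PAval A + ∑ z ∈ cs, cornerMult A z := by
  induction cs using Finset.strongInduction with
  | _ cs ih =>
  intro x hcs
  obtain ⟨Y, hY⟩ := exists_tail A hF
  rcases Finset.eq_empty_or_nonempty cs with rfl | hne
  · have hnc : ∀ z, x < z → ¬IsFiniteCorner A z := by
      intro z h1 h2
      have := (hcs z).mpr ⟨h1, h2⟩
      simp at this
    set y := max (x + 1) (Y + 1) with hy
    have hxy : x < y := lt_of_lt_of_le (by linarith) (le_max_left _ _)
    have hYy : Y < y := lt_of_lt_of_le (by linarith) (le_max_right _ _)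
    have h1 : loSlope A x = hiSlope A y :=
      loSlope_eq_hiSlope A hF hxy (fun z hz _ => hnc z hz)
    have h2 : activeSet A y = {PAval A} := hY y hYy
    have h3 : hiSlope A y = PAval A := by
      have hmem := hiSlope_mem A (active_nonempty A hF y)
      rw [h2, Finset.mem_singleton] at hmem
      exact hmem
    rw [h1, h3, Finset.sum_empty, add_zero]
  · set c₁ := cs.min' hne with hc₁def
    have hc₁ := (hcs c₁).mp (cs.min'_mem hne)
    have herase : ∀ z, z ∈ cs.erase c₁ ↔ c₁ < z ∧ IsFiniteCorner A z := by
      intro z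
      rw [Finset.mem_erase]
      constructor
      · rintro ⟨hne', hz⟩
        exact ⟨lt_of_le_of_ne (cs.min'_le z hz) (Ne.symm hne'), ((hcs z).mp hz).2⟩
      · rintro ⟨h1, h2⟩
        exact ⟨ne_of_gt h1, (hcs z).mpr ⟨lt_trans hc₁.1 h1, h2⟩⟩
    have hIH := ih (cs.erase c₁) (Finset.erase_ssubset (cs.min'_mem hne)) c₁ herase
    have hstep : loSlope A x = hiSlope A c₁ := by
      refine loSlope_eq_hiSlope A hF hc₁.1 ?_
      intro z hz1 hz2 hcz
      have hzmem := (hcs z).mpr ⟨hz1, hcz⟩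
      exact absurd (cs.min'_le z hzmem) (not_le.mpr hz2)
    have hlohi : loSlope A c₁ ≤ hiSlope A c₁ :=
      loSlope_le A (hiSlope_mem A (active_nonempty A hF c₁))
    have hmult : hiSlope A c₁ = loSlope A c₁ + cornerMult A c₁ := by
      rw [cornerMult_eq]
      omega
    rw [hstep, hmult, hIH, ← Finset.add_sum_erase cs _ (cs.min'_mem hne)]
    ring

end Corners

section Assembly

lemma Phi_zero {n d : ℕ} (A : Fin (d + 1) → Matrix (Fin n) (Fin n) Rmin) (γ : ℝ)
    (hfin : PAhat A γ ≠ ⊤) (hn0 : 0 < n) {m : ℕ} (hm : m ∉ activeSet A γ) :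
    Phi A γ hfin m = 0 := by
  rw [Phi]
  refine Finset.sum_eq_zero fun σ _ => Finset.sum_eq_zero fun κ hκ => ?_
  rw [PhiTerm, dif_neg]
  intro h
  exact hm ((Finset.mem_filter.mp hκ).2 ▸ active_of_valid A γ hfin hn0 σ κ h)

/-- **Theorem 1 (genericity of the multiplicities at a corner).**
Fix exponent matrices `A_0, …, A_d` and a finite corner `γ` of `P_A` of multiplicity `μ`.
Let `ν` be the sum of the multiplicities of the finite corners of `P_A` strictly greater
than `γ`, plus the valuation of `P_A` (the multiplicity of the corner `𝟘 = +∞`).  Then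
there is a nonzero polynomial `Φ` with complex coefficients in the variables
`{(a_k)_{ij} : (A_k)_{ij} < +∞}` such that whenever `Φ((a_k)_{ij}) ≠ 0`, the auxiliary
pencil `a^{(γ)}` built with the graphs `G_k = Opt_k(γ)` satisfies: `det a^{(γ)}` has
exactly `μ` nonzero roots (with multiplicity) and `0` is a root of `det a^{(γ)}` of
multiplicity exactly `ν`. -/
theorem genericity_at_corner
    (n d : ℕ) (hn : 1 ≤ n)
    (A : Fin (d + 1) → Matrix (Fin n) (Fin n) Rmin)
    (γ : ℝ) (hγ : IsFiniteCorner A γ)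
    (μ : ℕ) (hμ : μ = cornerMult A γ)
    (cs : Finset ℝ) (hcs : ∀ x : ℝ, x ∈ cs ↔ γ < x ∧ IsFiniteCorner A x)
    (ν : ℕ) (hν : ν = (∑ x ∈ cs, cornerMult A x) + PAval A) :
    ∃ Φ : MvPolynomial {p : Fin (d + 1) × Fin n × Fin n // A p.1 p.2.1 p.2.2 ≠ ⊤} ℂ,
      Φ ≠ 0 ∧
      ∀ a : Fin (d + 1) → Matrix (Fin n) (Fin n) ℂ,
        MvPolynomial.eval (fun p => a p.1.1 p.1.2.1 p.1.2.2) Φ ≠ 0 →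
          (auxPencil a (OptK A γ)).det ≠ 0 ∧
          Multiset.card ((auxPencil a (OptK A γ)).det.roots.filter (· ≠ 0)) = μ ∧
          (auxPencil a (OptK A γ)).det.rootMultiplicity 0 = ν := by
  obtain ⟨m₁, hm₁, m₂, hm₂, hm12⟩ := hγ
  have hm₁' := Finset.mem_filter.mp hm₁
  have hfin : PAhat A γ ≠ ⊤ := by
    rw [← hm₁'.2.2]
    exact WithTop.add_ne_top.mpr ⟨hm₁'.2.1, WithTop.coe_ne_top⟩
  have hF : (Fset A).Nonempty :=
    ⟨m₁, Finset.mem_filter.mpr ⟨hm₁'.1, hm₁'.2.1⟩⟩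
  have hact_ne : (activeSet A γ).Nonempty := ⟨m₁, hm₁⟩
  set mlo := loSlope A γ with hmlo
  set mhi := hiSlope A γ with hmhi
  have hν' : ν = mlo := by
    rw [hν, hmlo, loSlope_telescope A hF cs γ hcs, add_comm]
  have hμ' : μ = mhi - mlo := by rw [hμ, cornerMult_eq]
  have hlt : mlo < mhi := by
    have h1 := loSlope_le A hm₁
    have h2 := loSlope_le A hm₂
    have h3 := le_hiSlope A hm₁
    have h4 := le_hiSlope A hm₂
    rcases Nat.lt_or_ge mlo mhi with h | h
    · exact h
    · exact absurd (by omega : m₁ = m₂) hm12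
  refine ⟨Phi A γ hfin mlo * Phi A γ hfin mhi,
    mul_ne_zero (Phi_ne_zero A γ hfin (loSlope_mem A hact_ne))
      (Phi_ne_zero A γ hfin (hiSlope_mem A hact_ne)), ?_⟩
  intro a ha
  rw [map_mul] at ha
  obtain ⟨halo, hahi⟩ := mul_ne_zero_iff.mp ha
  set q := (auxPencil a (OptK A γ)).det with hq
  have heval : ∀ m, q.coeff m
      = MvPolynomial.eval (fun p => a p.1.1 p.1.2.1 p.1.2.2) (Phi A γ hfin m) :=
    fun m => (eval_Phi A γ hfin m a).symm
  have hcoefflo : q.coeff mlo ≠ 0 := by rw [heval]; exact halo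
  have hcoeffhi : q.coeff mhi ≠ 0 := by rw [heval]; exact hahi
  have hzero : ∀ m, m ∉ activeSet A γ → q.coeff m = 0 := by
    intro m hm
    rw [heval, Phi_zero A γ hfin hn hm, map_zero]
  have hq_ne : q ≠ 0 := fun h => hcoeffhi (by rw [h, Polynomial.coeff_zero])
  have hdeg : q.natDegree = mhi := by
    refine le_antisymm (Polynomial.natDegree_le_iff_coeff_eq_zero.mpr fun N hN => ?_)
      (Polynomial.le_natDegree_of_ne_zero hcoeffhi)
    exact hzero N fun hNa => absurd (le_hiSlope A hNa) (not_le.mpr hN)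
  have hrm : q.rootMultiplicity 0 = mlo := by
    refine le_antisymm ?_ ?_
    · rw [Polynomial.rootMultiplicity_le_iff hq_ne]
      intro hdvd
      rw [Polynomial.C_0, sub_zero] at hdvd
      exact hcoefflo (Polynomial.X_pow_dvd_iff.mp hdvd mlo (Nat.lt_succ_self mlo))
    · rw [Polynomial.le_rootMultiplicity_iff hq_ne, Polynomial.C_0, sub_zero]
      refine Polynomial.X_pow_dvd_iff.mpr fun e he => ?_
      exact hzero e fun hea => absurd (loSlope_le A hea) (not_le.mpr he)
  have hcard : Multiset.card q.roots = mhi := by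
    have := (IsAlgClosed.card_roots_eq_natDegree (p := q)).symm
    rw [← this, hdeg]
  refine ⟨hq_ne, ?_, by rw [hrm, hν']⟩
  have h1 : Multiset.card (q.roots.filter (· ≠ 0))
      + Multiset.card (q.roots.filter (fun x : ℂ => ¬ x ≠ 0)) = Multiset.card q.roots := by
    rw [← Multiset.card_add, Multiset.filter_add_not]
  have h2 : Multiset.card (q.roots.filter (fun x : ℂ => ¬ x ≠ 0)) = mlo := by
    have hcnt : Multiset.count (0 : ℂ) q.roots = mlo := by
      rw [Polynomial.count_roots, hrm]
    rw [← hcnt, Multiset.count_eq_card_filter_eq]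
    congr 1
    exact Multiset.filter_congr fun x _ => by simp [eq_comm]
  omega

end Assembly
end
end

section
/- Fix exponent matrices A_0, …, A_d ∈ (ℝ ∪ {+∞})^{n×n}. There exists a nonzero polynomial Φ, with complex coefficients, in the family of variables { (a_k)_{ij} : 0 ≤ k ≤ d, (A_k)_{ij} < +∞ }, such that whenever the leading-coefficient matrices a_0, …, a_d ∈ ℂ^{n×n} satisfy Φ((a_k)_{ij}) ≠ 0, and 𝒜_ε is any perturbed pencil with the asymptotics given by (a_k, A_k), there exists ε₀ > 0 such that for every ε ∈ (0, ε₀): (a) the degree of the polynomial det(𝒜_ε) ∈ ℂ[X] equals the degree of P_A (the largest k whose coefficient in P_A is ≠ 𝟘); and (b) the multiplicity of 0 as a root of det(𝒜_ε) equals the valuation of P_A (the smallest k whose coefficient in P_A is ≠ 𝟘). In particular, generically, the sum of the multiplicities of all corners of P_A equals the degree of det(𝒜_ε), and the number of identically zero eigenvalues of 𝒜_ε equals the multiplicity of the corner 𝟘 of P_A. -/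
open Polynomial Filter Topology Finset

noncomputable section

/-! ### Auxiliary machinery -/

section AuxMachinery

open Asymptotics

/-- Coefficient of `X^m` in the determinant of a polynomial pencil. -/
lemma pencil_coeff {n d : ℕ} (M : Fin (d+1) → Matrix (Fin n) (Fin n) ℂ) (m : ℕ) :
    (Matrix.det fun i j => ∑ k : Fin (d+1), Polynomial.C (M k i j) * X ^ (k:ℕ)).coeff m
    = ∑ σ : Equiv.Perm (Fin n), ∑ κ : Fin n → Fin (d+1),
        (if (∑ i, (κ i : ℕ)) = m then (Equiv.Perm.sign σ : ℂ) * ∏ i, M (κ i) i (σ i) else 0) := by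
  erw [← Matrix.det_transpose, Matrix.det_apply, finset_sum_coeff]
  refine Finset.sum_congr rfl fun σ _ => ?_
  have h1 : (∏ i : Fin n, Matrix.transpose (fun i j => ∑ k : Fin (d + 1), C (M k i j) * X ^ (k:ℕ)) (σ i) i)
      = ∑ κ ∈ Fintype.piFinset (fun _ : Fin n => (univ : Finset (Fin (d+1)))),
          Polynomial.C (∏ i, M (κ i) i (σ i)) * X ^ (∑ i, (κ i : ℕ)) := by
    rw [show (∏ i : Fin n, Matrix.transpose (fun i j => ∑ k : Fin (d + 1), C (M k i j) * X ^ (k:ℕ)) (σ i) i)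
        = ∏ i : Fin n, ∑ k : Fin (d+1), C (M k i (σ i)) * X ^ (k:ℕ) from rfl,
      Finset.prod_univ_sum]
    refine Finset.sum_congr rfl fun κ _ => ?_
    rw [Finset.prod_mul_distrib, Finset.prod_pow_eq_pow_sum,
      ← map_prod (Polynomial.C : ℂ →+* Polynomial ℂ)]
  rw [h1, Finset.smul_sum, finset_sum_coeff, Fintype.piFinset_univ]
  refine Finset.sum_congr rfl fun κ _ => ?_
  rw [coeff_smul, coeff_C_mul, coeff_X_pow]
  simp only [eq_comm, Units.smul_def, zsmul_eq_mul, mul_ite, mul_one, mul_zero, smul_ite, smul_zero]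

lemma rpow_littleO {s t : ℝ} (h : s < t) :
    (fun ε : ℝ => ε ^ t) =o[𝓝[>] (0:ℝ)] fun ε : ℝ => ε ^ s := by
  have h0 : Tendsto (fun ε : ℝ => ε ^ (t - s)) (𝓝[>] (0:ℝ)) (𝓝 0) := by
    have hc : ContinuousAt (fun ε : ℝ => ε ^ (t - s)) 0 :=
      Real.continuousAt_rpow_const 0 (t - s) (Or.inr (by linarith))
    have := hc.tendsto.mono_left (nhdsWithin_le_nhds (s := Set.Ioi (0:ℝ)))
    simpa [Real.zero_rpow (by linarith : t - s ≠ 0)] using this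
  have h1 : (fun ε : ℝ => ε ^ (t - s)) =o[𝓝[>] (0:ℝ)] (fun _ => (1:ℝ)) :=
    (isLittleO_one_iff ℝ).mpr h0
  have h2 := h1.mul_isBigO (isBigO_refl (fun ε : ℝ => ε ^ s) (𝓝[>] (0:ℝ)))
  refine h2.congr' ?_ ?_
  · filter_upwards [self_mem_nhdsWithin] with ε (hε : (0:ℝ) < ε)
    rw [← Real.rpow_add hε]; ring_nf
  · filter_upwards with ε; simp

lemma ev_zero_littleO {f : ℝ → ℂ} (g : ℝ → ℝ) (h : ∀ᶠ ε in 𝓝[>] (0:ℝ), f ε = 0) :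
    f =o[𝓝[>] (0:ℝ)] g :=
  (isLittleO_zero g _).congr' (by filter_upwards [h] with ε hε using hε.symm) EventuallyEq.rfl

lemma ev_ne_zero {f : ℝ → ℂ} {L : ℂ} {c : ℝ} (hL : L ≠ 0)
    (h : (fun ε : ℝ => f ε - L * ((ε ^ c : ℝ) : ℂ)) =o[𝓝[>] (0:ℝ)] fun ε : ℝ => (ε ^ c : ℝ)) :
    ∀ᶠ ε in 𝓝[>] (0:ℝ), f ε ≠ 0 := by
  have hL2 : (0:ℝ) < ‖L‖ / 2 := by
    have := norm_pos_iff.2 hL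
    linarith
  filter_upwards [h.def hL2, self_mem_nhdsWithin] with ε hε (hε0 : (0:ℝ) < ε) hf0
  rw [hf0, zero_sub, norm_neg, norm_mul, Complex.norm_real] at hε
  have hp : 0 < ε ^ c := Real.rpow_pos_of_pos hε0 c
  rw [Real.norm_of_nonneg hp.le] at hε
  nlinarith [norm_pos_iff.2 hL]

lemma prod_asymp {n : ℕ} (f : Fin n → ℝ → ℂ) (a : Fin n → ℂ) (t : Fin n → ℝ)
    (hf : ∀ i, (fun ε : ℝ => f i ε - a i * ((ε ^ t i : ℝ) : ℂ)) =o[𝓝[>] (0:ℝ)]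
      fun ε : ℝ => (ε ^ t i : ℝ)) (s : Finset (Fin n)) :
    (fun ε : ℝ => (∏ i ∈ s, f i ε) - (∏ i ∈ s, a i) * ((ε ^ (∑ i ∈ s, t i) : ℝ) : ℂ))
      =o[𝓝[>] (0:ℝ)] fun ε : ℝ => (ε ^ (∑ i ∈ s, t i) : ℝ) := by
  classical
  induction s using Finset.cons_induction with
  | empty =>
      refine (isLittleO_zero _ _).congr (fun ε => ?_) (fun ε => rfl)
      simp
  | cons i s hi ih =>
      have ofReal_bigO : ∀ T : ℝ, (fun ε : ℝ => ((ε ^ T : ℝ) : ℂ)) =O[𝓝[>] (0:ℝ)]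
          fun ε : ℝ => (ε ^ T : ℝ) :=
        fun T => isBigO_of_le _ (fun ε => by rw [Complex.norm_real])
      have hFO : (fun ε : ℝ => ∏ j ∈ s, f j ε) =O[𝓝[>] (0:ℝ)]
          fun ε : ℝ => (ε ^ (∑ j ∈ s, t j) : ℝ) := by
        have := ih.isBigO.add (((ofReal_bigO (∑ j ∈ s, t j)).const_mul_left (∏ j ∈ s, a j)))
        simpa using this
      have term1 : (fun ε : ℝ => (f i ε - a i * ((ε ^ t i : ℝ) : ℂ)) * ∏ j ∈ s, f j ε)
          =o[𝓝[>] (0:ℝ)] fun ε : ℝ => (ε ^ t i : ℝ) * (ε ^ (∑ j ∈ s, t j) : ℝ) :=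
        (hf i).mul_isBigO hFO
      have term2 : (fun ε : ℝ => (a i * ((ε ^ t i : ℝ) : ℂ)) *
            ((∏ j ∈ s, f j ε) - (∏ j ∈ s, a j) * ((ε ^ (∑ j ∈ s, t j) : ℝ) : ℂ)))
          =o[𝓝[>] (0:ℝ)] fun ε : ℝ => (ε ^ t i : ℝ) * (ε ^ (∑ j ∈ s, t j) : ℝ) :=
        ((ofReal_bigO (t i)).const_mul_left (a i)).mul_isLittleO ih
      have hsum := term1.add term2
      refine hsum.congr' ?_ ?_
      · filter_upwards [self_mem_nhdsWithin] with ε (hε : (0:ℝ) < ε)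
        rw [Finset.prod_cons, Finset.prod_cons, Finset.sum_cons,
          Real.rpow_add hε]
        push_cast
        ring
      · filter_upwards [self_mem_nhdsWithin] with ε (hε : (0:ℝ) < ε)
        rw [Finset.sum_cons, Real.rpow_add hε]

variable {n d : ℕ} (A : Fin (d+1) → Matrix (Fin n) (Fin n) Rmin)

/-- The min-plus weight of the term of the permanent expansion indexed by `(σ, κ)`. -/
def termWeight (σ : Equiv.Perm (Fin n)) (κ : Fin n → Fin (d+1)) : Rmin :=
  ∑ i, A (κ i) i (σ i)

lemma PAcoeff_le {m : ℕ} (σ : Equiv.Perm (Fin n)) (κ : Fin n → Fin (d+1))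
    (hκ : ∑ i, (κ i : ℕ) = m) : PAcoeff A m ≤ termWeight A σ κ :=
  le_trans (Finset.inf_le (mem_univ σ)) (Finset.inf_le (by simp [hκ]))

lemma PAcoeff_top_of_gt {m : ℕ} (hm : n * d < m) : PAcoeff A m = ⊤ := by
  rw [PAcoeff]
  refine (Finset.inf_eq_top_iff _ _).2 fun σ _ => (Finset.inf_eq_top_iff _ _).2 fun κ hκ => ?_
  exfalso
  rw [Finset.mem_filter] at hκ
  have : ∑ i, (κ i : ℕ) ≤ ∑ _i : Fin n, d := Finset.sum_le_sum fun i _ => Fin.is_le _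
  simp only [Finset.sum_const, card_univ, Fintype.card_fin, smul_eq_mul] at this
  omega

lemma weight_entries_ne_top {σ : Equiv.Perm (Fin n)} {κ : Fin n → Fin (d+1)}
    (h : termWeight A σ κ ≠ ⊤) (i : Fin n) : A (κ i) i (σ i) ≠ ⊤ := by
  rw [termWeight, Ne, WithTop.sum_eq_top] at h
  push_neg at h
  exact h i (mem_univ i)

section WithPencil

variable {𝒜 : ℝ → Fin (d + 1) → Matrix (Fin n) (Fin n) ℂ}
  {a : Fin (d + 1) → Matrix (Fin n) (Fin n) ℂ}

lemma term_asymp_top (hA : HasAsymptotics 𝒜 a A) (σ : Equiv.Perm (Fin n))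
    (κ : Fin n → Fin (d+1)) (h : termWeight A σ κ = ⊤) :
    ∀ᶠ ε in 𝓝[>] (0:ℝ), ∏ i, 𝒜 ε (κ i) i (σ i) = 0 := by
  rw [termWeight, WithTop.sum_eq_top] at h
  obtain ⟨i₀, -, hi₀⟩ := h
  filter_upwards [(hA (κ i₀) i₀ (σ i₀)).1 hi₀] with ε hε
  exact Finset.prod_eq_zero (mem_univ i₀) hε

lemma term_asymp_fin (hA : HasAsymptotics 𝒜 a A) (σ : Equiv.Perm (Fin n))
    (κ : Fin n → Fin (d+1)) {t : ℝ} (h : termWeight A σ κ = (t : Rmin)) :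
    (fun ε : ℝ => (∏ i, 𝒜 ε (κ i) i (σ i)) - (∏ i, a (κ i) i (σ i)) * ((ε ^ t : ℝ) : ℂ))
      =o[𝓝[>] (0:ℝ)] fun ε : ℝ => (ε ^ t : ℝ) := by
  have hne : ∀ i : Fin n, A (κ i) i (σ i) ≠ ⊤ :=
    weight_entries_ne_top A (by rw [h]; exact WithTop.coe_ne_top)
  set t' : Fin n → ℝ := fun i => (A (κ i) i (σ i)).untop (hne i) with ht'
  have hAt' : ∀ i, A (κ i) i (σ i) = ((t' i : ℝ) : Rmin) := fun i =>
    (WithTop.coe_untop _ (hne i)).symm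
  have hsum : ∑ i, t' i = t := by
    have : ((∑ i, t' i : ℝ) : Rmin) = ((t : ℝ) : Rmin) := by
      rw [WithTop.coe_sum, ← h, termWeight]
      exact Finset.sum_congr rfl fun i _ => (hAt' i).symm
    exact_mod_cast this
  have := prod_asymp (fun i ε => 𝒜 ε (κ i) i (σ i)) (fun i => a (κ i) i (σ i)) t'
    (fun i => (hA (κ i) i (σ i)).2 (t' i) (hAt' i)) Finset.univ
  rwa [hsum] at this

end WithPencil

open Classical in
/-- The coefficient of the leading term of the `m`-th coefficient of `det 𝒜_ε`. -/
def leadCoef (a : Fin (d + 1) → Matrix (Fin n) (Fin n) ℂ) (m : ℕ) : ℂ :=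
  ∑ σ : Equiv.Perm (Fin n), ∑ κ : Fin n → Fin (d+1),
    if (∑ i, (κ i : ℕ)) = m ∧ termWeight A σ κ = PAcoeff A m
    then (Equiv.Perm.sign σ : ℂ) * ∏ i, a (κ i) i (σ i) else 0

section WithPencil2

variable {𝒜 : ℝ → Fin (d + 1) → Matrix (Fin n) (Fin n) ℂ}
  {a : Fin (d + 1) → Matrix (Fin n) (Fin n) ℂ}

open Classical in
lemma coeff_asymp (hA : HasAsymptotics 𝒜 a A) (m : ℕ) {c : ℝ}
    (hc : PAcoeff A m = (c : Rmin)) :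
    (fun ε : ℝ => (pencilPoly 𝒜 ε).coeff m - leadCoef A a m * ((ε ^ c : ℝ) : ℂ))
      =o[𝓝[>] (0:ℝ)] fun ε : ℝ => (ε ^ c : ℝ) := by
  have key : ∀ σ : Equiv.Perm (Fin n), ∀ κ : Fin n → Fin (d+1),
      (fun ε : ℝ =>
        (if (∑ i, (κ i : ℕ)) = m then (Equiv.Perm.sign σ : ℂ) * ∏ i, 𝒜 ε (κ i) i (σ i) else 0)
        - (if (∑ i, (κ i : ℕ)) = m ∧ termWeight A σ κ = PAcoeff A m
           then ((Equiv.Perm.sign σ : ℂ) * ∏ i, a (κ i) i (σ i)) * ((ε ^ c : ℝ) : ℂ) else 0))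
      =o[𝓝[>] (0:ℝ)] fun ε : ℝ => (ε ^ c : ℝ) := by
    intro σ κ
    by_cases hm : (∑ i, (κ i : ℕ)) = m
    · rcases eq_or_ne (termWeight A σ κ) ⊤ with hT | hT
      · have hcond : ¬((∑ i, (κ i : ℕ)) = m ∧ termWeight A σ κ = PAcoeff A m) := by
          rintro ⟨-, h2⟩
          rw [hT, hc] at h2
          exact WithTop.top_ne_coe h2
        refine ev_zero_littleO _ ?_
        filter_upwards [term_asymp_top A hA σ κ hT] with ε hε
        rw [if_pos hm, if_neg hcond, hε, mul_zero, sub_zero]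
      · obtain ⟨t, ht⟩ := WithTop.ne_top_iff_exists.1 hT
        have hct : c ≤ t := by
          have := PAcoeff_le A σ κ hm
          rw [hc, ← ht] at this
          exact_mod_cast this
        rcases eq_or_lt_of_le hct with heq | hlt
        · subst heq
          have hcond : (∑ i, (κ i : ℕ)) = m ∧ termWeight A σ κ = PAcoeff A m :=
            ⟨hm, by rw [← ht, hc]⟩
          have := (term_asymp_fin A hA σ κ ht.symm).const_mul_left
            ((Equiv.Perm.sign σ : ℂ))
          refine this.congr (fun ε => ?_) (fun ε => rfl)
          rw [if_pos hm, if_pos hcond]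
          ring
        · have hcond : ¬((∑ i, (κ i : ℕ)) = m ∧ termWeight A σ κ = PAcoeff A m) := by
            rintro ⟨-, h2⟩
            rw [← ht, hc] at h2
            have : t = c := by exact_mod_cast h2
            linarith
          have hprod := term_asymp_fin A hA σ κ ht.symm
          have h1 : (fun ε : ℝ => ((ε ^ t : ℝ) : ℂ)) =O[𝓝[>] (0:ℝ)] fun ε : ℝ => (ε ^ t : ℝ) :=
            isBigO_of_le _ fun ε => by rw [Complex.norm_real]
          have hO : (fun ε : ℝ => (Equiv.Perm.sign σ : ℂ) * ∏ i, 𝒜 ε (κ i) i (σ i))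
              =O[𝓝[>] (0:ℝ)] fun ε : ℝ => (ε ^ t : ℝ) := by
            have := (hprod.isBigO.add (h1.const_mul_left (∏ i, a (κ i) i (σ i)))).const_mul_left
              ((Equiv.Perm.sign σ : ℂ))
            simpa using this
          have hfin := hO.trans_isLittleO (rpow_littleO hlt)
          refine hfin.congr (fun ε => ?_) (fun ε => rfl)
          rw [if_pos hm, if_neg hcond, sub_zero]
    · refine ev_zero_littleO _ ?_
      filter_upwards with ε
      simp [hm]
  have heq : ∀ ε : ℝ, (pencilPoly 𝒜 ε).coeff m - leadCoef A a m * ((ε ^ c : ℝ) : ℂ)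
      = ∑ σ : Equiv.Perm (Fin n), ∑ κ : Fin n → Fin (d+1),
        ((if (∑ i, (κ i : ℕ)) = m then (Equiv.Perm.sign σ : ℂ) * ∏ i, 𝒜 ε (κ i) i (σ i) else 0)
        - (if (∑ i, (κ i : ℕ)) = m ∧ termWeight A σ κ = PAcoeff A m
           then ((Equiv.Perm.sign σ : ℂ) * ∏ i, a (κ i) i (σ i)) * ((ε ^ c : ℝ) : ℂ) else 0)) := by
    intro ε
    rw [pencilPoly, pencil_coeff, leadCoef, Finset.sum_mul]
    rw [← Finset.sum_sub_distrib]
    refine Finset.sum_congr rfl fun σ _ => ?_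
    rw [Finset.sum_mul, ← Finset.sum_sub_distrib]
    refine Finset.sum_congr rfl fun κ _ => ?_
    rw [ite_mul, zero_mul]
  have htot : (fun ε : ℝ => ∑ σ : Equiv.Perm (Fin n), ∑ κ : Fin n → Fin (d+1),
        ((if (∑ i, (κ i : ℕ)) = m then (Equiv.Perm.sign σ : ℂ) * ∏ i, 𝒜 ε (κ i) i (σ i) else 0)
        - (if (∑ i, (κ i : ℕ)) = m ∧ termWeight A σ κ = PAcoeff A m
           then ((Equiv.Perm.sign σ : ℂ) * ∏ i, a (κ i) i (σ i)) * ((ε ^ c : ℝ) : ℂ) else 0)))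
      =o[𝓝[>] (0:ℝ)] fun ε : ℝ => (ε ^ c : ℝ) :=
    IsLittleO.fun_sum fun σ _ => IsLittleO.fun_sum fun κ _ => key σ κ
  exact htot.congr (fun ε => (heq ε).symm) (fun ε => rfl)

lemma coeff_ev_zero (hA : HasAsymptotics 𝒜 a A) (m : ℕ) (hc : PAcoeff A m = ⊤) :
    ∀ᶠ ε in 𝓝[>] (0:ℝ), (pencilPoly 𝒜 ε).coeff m = 0 := by
  classical
  have hall : ∀ᶠ ε in 𝓝[>] (0:ℝ), ∀ σ ∈ (univ : Finset (Equiv.Perm (Fin n))),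
      ∀ κ ∈ (univ : Finset (Fin n → Fin (d+1))),
      (∑ i, (κ i : ℕ)) = m → ∏ i, 𝒜 ε (κ i) i (σ i) = 0 := by
    rw [eventually_all_finset]
    intro σ _
    rw [eventually_all_finset]
    intro κ _
    by_cases hκ : (∑ i, (κ i : ℕ)) = m
    · have hT : termWeight A σ κ = ⊤ := by
        have := PAcoeff_le A σ κ hκ
        rw [hc] at this
        exact top_le_iff.1 this
      filter_upwards [term_asymp_top A hA σ κ hT] with ε h _
      exact h
    · filter_upwards with ε h
      exact absurd h hκ
  filter_upwards [hall] with ε hε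
  rw [pencilPoly, pencil_coeff]
  refine Finset.sum_eq_zero fun σ _ => Finset.sum_eq_zero fun κ _ => ?_
  split_ifs with hκ
  · rw [hε σ (mem_univ σ) κ (mem_univ κ) hκ, mul_zero]
  · rfl

end WithPencil2

open Classical in
/-- The monomial in the variables `(a_k)_{ij}` associated with a term of the permanent. -/
def mono (σ : Equiv.Perm (Fin n)) (κ : Fin n → Fin (d+1)) :
    MvPolynomial {p : Fin (d + 1) × Fin n × Fin n // A p.1 p.2.1 p.2.2 ≠ ⊤} ℂ :=
  ∏ i, if h : A (κ i) i (σ i) ≠ ⊤ then MvPolynomial.X ⟨(κ i, i, σ i), h⟩ else 0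

open Classical in
/-- The polynomial whose nonvanishing guarantees that the `m`-th coefficient of
`det 𝒜_ε` has the expected leading term. -/
def Lpoly (m : ℕ) : MvPolynomial {p : Fin (d + 1) × Fin n × Fin n // A p.1 p.2.1 p.2.2 ≠ ⊤} ℂ :=
  ∑ σ : Equiv.Perm (Fin n), ∑ κ : Fin n → Fin (d+1),
    if (∑ i, (κ i : ℕ)) = m ∧ termWeight A σ κ = PAcoeff A m
    then MvPolynomial.C (Equiv.Perm.sign σ : ℂ) * mono A σ κ else 0

open Classical in
lemma eval_Lpoly (a : Fin (d + 1) → Matrix (Fin n) (Fin n) ℂ) (m : ℕ)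
    (hm : PAcoeff A m ≠ ⊤) :
    MvPolynomial.eval (fun p : {p : Fin (d + 1) × Fin n × Fin n // A p.1 p.2.1 p.2.2 ≠ ⊤} =>
      a p.1.1 p.1.2.1 p.1.2.2) (Lpoly A m) = leadCoef A a m := by
  unfold Lpoly
  rw [map_sum, leadCoef]
  refine Finset.sum_congr rfl fun σ _ => ?_
  rw [map_sum]
  refine Finset.sum_congr rfl fun κ _ => ?_
  split_ifs with hcond
  · have hW : termWeight A σ κ ≠ ⊤ := hcond.2 ▸ hm
    rw [map_mul, MvPolynomial.eval_C, mono, map_prod]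
    congr 1
    refine Finset.prod_congr rfl fun i _ => ?_
    rw [dif_pos (weight_entries_ne_top A hW i), MvPolynomial.eval_X]
  · exact map_zero _

open Classical in
lemma Lpoly_ne_zero (m : ℕ) (hm : PAcoeff A m ≠ ⊤) : Lpoly A m ≠ 0 := by
  obtain ⟨σ₀, -, hσ₀⟩ := Finset.exists_mem_eq_inf (univ : Finset (Equiv.Perm (Fin n)))
    univ_nonempty (fun σ => (Finset.univ.filter
      fun κ : Fin n → Fin (d + 1) => ∑ i, (κ i : ℕ) = m).inf fun κ => ∑ i, A (κ i) i (σ i))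
  have hσ₀' : PAcoeff A m = _ := hσ₀
  have hne : ((Finset.univ.filter
      fun κ : Fin n → Fin (d + 1) => ∑ i, (κ i : ℕ) = m)).Nonempty := by
    rw [Finset.nonempty_iff_ne_empty]
    intro hemp
    rw [PAcoeff, hσ₀, hemp, Finset.inf_empty] at hm
    exact hm rfl
  obtain ⟨κ₀, hκ₀mem, hκ₀⟩ := Finset.exists_mem_eq_inf _ hne
    (fun κ : Fin n → Fin (d+1) => ∑ i, A (κ i) i (σ₀ i))
  rw [Finset.mem_filter] at hκ₀mem
  have hκ₀m : ∑ i, (κ₀ i : ℕ) = m := hκ₀mem.2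
  have hw₀ : termWeight A σ₀ κ₀ = PAcoeff A m := by
    rw [termWeight, ← hκ₀, ← hσ₀']
  have hwne : termWeight A σ₀ κ₀ ≠ ⊤ := hw₀ ▸ hm
  set b : {p : Fin (d + 1) × Fin n × Fin n // A p.1 p.2.1 p.2.2 ≠ ⊤} → ℂ :=
    fun p => if p.1.1 = κ₀ p.1.2.1 ∧ p.1.2.2 = σ₀ p.1.2.1 then 1 else 0 with hb
  intro hzero
  have heval : MvPolynomial.eval b (Lpoly A m) = (Equiv.Perm.sign σ₀ : ℂ) := by
    unfold Lpoly
    rw [map_sum]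
    rw [Finset.sum_eq_single σ₀]
    · rw [map_sum, Finset.sum_eq_single κ₀]
      · rw [if_pos ⟨hκ₀m, hw₀⟩, map_mul, MvPolynomial.eval_C, mono, map_prod]
        have : ∀ i : Fin n, MvPolynomial.eval b
            (if h : A (κ₀ i) i (σ₀ i) ≠ ⊤ then MvPolynomial.X
              (⟨(κ₀ i, i, σ₀ i), h⟩ : {p : Fin (d + 1) × Fin n × Fin n // A p.1 p.2.1 p.2.2 ≠ ⊤})
            else 0) = 1 := by
          intro i
          rw [dif_pos (weight_entries_ne_top A hwne i), MvPolynomial.eval_X, hb]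
          simp
        rw [Finset.prod_congr rfl fun i _ => this i]
        simp
      · intro κ _ hκne
        split_ifs with hcond
        · have : ∃ i, κ i ≠ κ₀ i := by
            by_contra hcon
            push_neg at hcon
            exact hκne (funext hcon)
          obtain ⟨i₀, hi₀⟩ := this
          rw [map_mul, mono, map_prod]
          refine mul_eq_zero_of_right _ (Finset.prod_eq_zero (mem_univ i₀) ?_)
          rw [dif_pos (weight_entries_ne_top A (hcond.2 ▸ hm) i₀), MvPolynomial.eval_X, hb]
          simp only
          rw [if_neg]
          rintro ⟨h1, -⟩
          exact hi₀ h1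
        · exact map_zero _
      · intro h; exact absurd (mem_univ κ₀) h
    · intro σ _ hσne
      rw [map_sum]
      refine Finset.sum_eq_zero fun κ _ => ?_
      split_ifs with hcond
      · have : ∃ i, σ i ≠ σ₀ i := by
          by_contra hcon
          push_neg at hcon
          exact hσne (Equiv.ext hcon)
        obtain ⟨i₀, hi₀⟩ := this
        rw [map_mul, mono, map_prod]
        refine mul_eq_zero_of_right _ (Finset.prod_eq_zero (mem_univ i₀) ?_)
        rw [dif_pos (weight_entries_ne_top A (hcond.2 ▸ hm) i₀), MvPolynomial.eval_X, hb]
        simp only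
        rw [if_neg]
        rintro ⟨-, h2⟩
        exact hi₀ h2
      · exact map_zero _
    · intro h; exact absurd (mem_univ σ₀) h
  rw [hzero, map_zero] at heval
  have : (Equiv.Perm.sign σ₀ : ℂ) ≠ 0 := by
    rcases Int.units_eq_one_or (Equiv.Perm.sign σ₀) with h | h <;> rw [h] <;> norm_num
  exact this heval.symm

end AuxMachinery

/-- **Generic degree and valuation of `det 𝒜_ε`.**
Fix exponent matrices `A_0, …, A_d` (with `P_A` not identically `𝟘`).  There is a nonzero
polynomial `Φ` with complex coefficients in the variables `{(a_k)_{ij} : (A_k)_{ij} < +∞}`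
such that whenever `Φ((a_k)_{ij}) ≠ 0` and `𝒜_ε` is any perturbed pencil with the
asymptotics given by `(a_k, A_k)`, for all sufficiently small `ε > 0`:
(a) the degree of `det 𝒜_ε ∈ ℂ[X]` equals the degree of `P_A`; and
(b) the multiplicity of `0` as a root of `det 𝒜_ε` equals the valuation of `P_A`.
Hence, generically, the sum of the multiplicities of all corners of `P_A` equals the
degree of `det 𝒜_ε` and the number of identically zero eigenvalues of `𝒜_ε` equals the
multiplicity of the corner `𝟘` of `P_A`. -/
theorem generic_degree_and_valuation
    (n d : ℕ) (hn : 1 ≤ n)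
    (A : Fin (d + 1) → Matrix (Fin n) (Fin n) Rmin)
    (hPA : ∃ m : ℕ, PAcoeff A m ≠ ⊤) :
    ∃ Φ : MvPolynomial {p : Fin (d + 1) × Fin n × Fin n // A p.1 p.2.1 p.2.2 ≠ ⊤} ℂ,
      Φ ≠ 0 ∧
      ∀ a : Fin (d + 1) → Matrix (Fin n) (Fin n) ℂ,
        MvPolynomial.eval (fun p => a p.1.1 p.1.2.1 p.1.2.2) Φ ≠ 0 →
          ∀ 𝒜 : ℝ → Fin (d + 1) → Matrix (Fin n) (Fin n) ℂ,
            (∀ k i j, ContinuousOn (fun ε : ℝ => 𝒜 ε k i j) (Set.Ioi 0)) →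
            HasAsymptotics 𝒜 a A →
            ∃ ε₀ > (0 : ℝ), ∀ ε ∈ Set.Ioo (0 : ℝ) ε₀,
              pencilPoly 𝒜 ε ≠ 0 ∧
              (pencilPoly 𝒜 ε).natDegree = PAdeg A ∧
              (pencilPoly 𝒜 ε).rootMultiplicity 0 = PAval A := by
  classical
  have hbdd : BddAbove {m | PAcoeff A m ≠ ⊤} := ⟨n * d, fun m hm => by
    by_contra h
    push_neg at h
    exact hm (PAcoeff_top_of_gt A h)⟩
  have hdeg_mem : PAcoeff A (PAdeg A) ≠ ⊤ := Nat.sSup_mem hPA hbdd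
  have hval_mem : PAcoeff A (PAval A) ≠ ⊤ := Nat.sInf_mem hPA
  have hdle : PAdeg A ≤ n * d := by
    by_contra h
    push_neg at h
    exact hdeg_mem (PAcoeff_top_of_gt A h)
  have hvd : PAval A ≤ PAdeg A := Nat.sInf_le hdeg_mem
  refine ⟨Lpoly A (PAdeg A) * Lpoly A (PAval A),
    mul_ne_zero (Lpoly_ne_zero A _ hdeg_mem) (Lpoly_ne_zero A _ hval_mem), ?_⟩
  intro a hΦ 𝒜 _hcont hAsym
  rw [map_mul] at hΦ
  have hLdeg : leadCoef A a (PAdeg A) ≠ 0 := by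
    rw [← eval_Lpoly A a _ hdeg_mem]
    exact left_ne_zero_of_mul hΦ
  have hLval : leadCoef A a (PAval A) ≠ 0 := by
    rw [← eval_Lpoly A a _ hval_mem]
    exact right_ne_zero_of_mul hΦ
  obtain ⟨cdeg, hcdeg⟩ := WithTop.ne_top_iff_exists.1 hdeg_mem
  obtain ⟨cval, hcval⟩ := WithTop.ne_top_iff_exists.1 hval_mem
  have Edeg : ∀ᶠ ε in 𝓝[>] (0:ℝ), (pencilPoly 𝒜 ε).coeff (PAdeg A) ≠ 0 :=
    ev_ne_zero hLdeg (coeff_asymp A hAsym _ hcdeg.symm)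
  have Eval : ∀ᶠ ε in 𝓝[>] (0:ℝ), (pencilPoly 𝒜 ε).coeff (PAval A) ≠ 0 :=
    ev_ne_zero hLval (coeff_asymp A hAsym _ hcval.symm)
  have Ezero : ∀ᶠ ε in 𝓝[>] (0:ℝ), ∀ m ∈ Finset.range (n * d + 1),
      PAcoeff A m = ⊤ → (pencilPoly 𝒜 ε).coeff m = 0 := by
    rw [eventually_all_finset]
    intro m _
    by_cases hm : PAcoeff A m = ⊤
    · filter_upwards [coeff_ev_zero A hAsym m hm] with ε h _
      exact h
    · filter_upwards with ε h
      exact absurd h hm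
  have hcomb := Edeg.and (Eval.and Ezero)
  rw [eventually_iff, mem_nhdsGT_iff_exists_Ioo_subset] at hcomb
  obtain ⟨ε₀, hε₀, hsub⟩ := hcomb
  refine ⟨ε₀, hε₀, ?_⟩
  intro ε hε
  obtain ⟨h1, h2, h3⟩ := hsub hε
  have hcoeff_zero_high : ∀ N, PAdeg A < N → (pencilPoly 𝒜 ε).coeff N = 0 := by
    intro N hN
    by_cases hNd : N ≤ n * d
    · refine h3 N (Finset.mem_range.2 (by omega)) ?_
      by_contra hne
      have : N ≤ PAdeg A := le_csSup hbdd hne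
      omega
    · rw [pencilPoly, pencil_coeff]
      refine Finset.sum_eq_zero fun σ _ => Finset.sum_eq_zero fun κ _ => ?_
      rw [if_neg]
      intro hκ
      have : ∑ i, (κ i : ℕ) ≤ ∑ _i : Fin n, d := Finset.sum_le_sum fun i _ => Fin.is_le _
      simp only [Finset.sum_const, card_univ, Fintype.card_fin, smul_eq_mul] at this
      omega
  have hne0 : pencilPoly 𝒜 ε ≠ 0 := fun h => h1 (by rw [h, Polynomial.coeff_zero])
  refine ⟨hne0, ?_, ?_⟩
  · exact le_antisymm (Polynomial.natDegree_le_iff_coeff_eq_zero.2 hcoeff_zero_high)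
      (Polynomial.le_natDegree_of_ne_zero h1)
  · rw [Polynomial.rootMultiplicity_eq_natTrailingDegree']
    refine le_antisymm (Polynomial.natTrailingDegree_le_of_ne_zero h2)
      (Polynomial.le_natTrailingDegree hne0 ?_)
    intro m hm
    refine h3 m (Finset.mem_range.2 (by omega)) ?_
    exact not_not.1 fun hne => Nat.notMem_of_lt_sInf hm hne
end
end

section
/- Let B ∈ (ℝ ∪ {+∞})^{n×n} be a matrix with perm B ≠ +∞, i.e., there exists a permutation σ of {1,…,n} with Σ_{i=1}^n B_{iσ(i)} < +∞. Then there exists a Hungarian pair with respect to B: vectors U, V ∈ ℝ^n such that B_{ij} ≥ U_i + V_j for all i, j, and U_1 + ⋯ + U_n + V_1 + ⋯ + V_n = perm B = min_σ Σ_{i=1}^n B_{iσ(i)}. -/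
open Finset

noncomputable section

namespace HungarianAux

variable {n : ℕ}

def splice (w : ℕ → Fin n) (x y u : ℕ) : Fin n := if u < x then w u else w (u + (y - x))

lemma splice_eq_left (w : ℕ → Fin n) {x y : ℕ} (hxy : x ≤ y) (hw : w x = w y) {a : ℕ}
    (ha : a ≤ x) : splice w x y a = w a := by
  unfold splice
  rcases lt_or_eq_of_le ha with h | h
  · simp [h]
  · subst h
    simp [Nat.add_sub_cancel' hxy, ← hw]

lemma splice_eq_right (w : ℕ → Fin n) {x y : ℕ} {u : ℕ} (hu : x ≤ u) :
    splice w x y u = w (u + (y - x)) := by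
  unfold splice
  simp [Nat.not_lt.mpr hu]

lemma splice_sum (c : Fin n → Fin n → ℝ) (w : ℕ → Fin n) {x y a b : ℕ}
    (hxy : x ≤ y) (hw : w x = w y) (ha : a ≤ x) (hb : y ≤ b) :
    ∑ u ∈ Ico a (b - (y - x)), c (splice w x y u) (splice w x y (u + 1))
      = ∑ u ∈ Ico a b, c (w u) (w (u + 1)) - ∑ u ∈ Ico x y, c (w u) (w (u + 1)) := by
  have hxb : x ≤ b - (y - x) := by omega
  have h1 : ∑ u ∈ Ico a x, c (splice w x y u) (splice w x y (u + 1))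
      = ∑ u ∈ Ico a x, c (w u) (w (u + 1)) := by
    refine Finset.sum_congr rfl fun u hu => ?_
    rw [Finset.mem_Ico] at hu
    rw [splice_eq_left w hxy hw (le_of_lt hu.2), splice_eq_left w hxy hw hu.2]
  have h2 : ∑ u ∈ Ico x (b - (y - x)), c (splice w x y u) (splice w x y (u + 1))
      = ∑ u ∈ Ico y b, c (w u) (w (u + 1)) := by
    have : ∀ u ∈ Ico x (b - (y - x)), c (splice w x y u) (splice w x y (u + 1))
        = c (w (u + (y - x))) (w (u + (y - x) + 1)) := by
      intro u hu
      rw [Finset.mem_Ico] at hu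
      rw [splice_eq_right w hu.1, splice_eq_right w (le_trans hu.1 (Nat.le_succ u)),
        Nat.add_right_comm u 1 (y - x)]
    rw [Finset.sum_congr rfl this, Finset.sum_Ico_add' (fun u => c (w u) (w (u + 1))) x (b - (y - x)) (y - x)]
    have e1 : x + (y - x) = y := by omega
    have e2 : b - (y - x) + (y - x) = b := by omega
    rw [e1, e2]
  rw [← Finset.sum_Ico_consecutive _ ha hxb, h1, h2,
    ← Finset.sum_Ico_consecutive (fun u => c (w u) (w (u + 1))) (le_trans ha hxy) hb,
    ← Finset.sum_Ico_consecutive (fun u => c (w u) (w (u + 1))) ha hxy]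
  ring


lemma cycle_nonneg (c : Fin n → Fin n → ℝ) (hdiag : ∀ i, c i i = 0)
    (hperm : ∀ ρ : Equiv.Perm (Fin n), 0 ≤ ∑ i, c i (ρ i)) :
    ∀ (N : ℕ) (w : ℕ → Fin n) (a b : ℕ), b - a ≤ N → a < b → w a = w b →
      0 ≤ ∑ u ∈ Ico a b, c (w u) (w (u + 1)) := by
  intro N
  induction N with
  | zero => intro w a b hN hab _; omega
  | succ N IH =>
    intro w a b hN hab hw
    by_cases hinj : Set.InjOn w (Set.Ico a b)
    · set L : ℕ := b - a with hL
      have hL1 : 1 ≤ L := by omega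
      set l : List (Fin n) := (List.range L).map (fun i => w (a + i)) with hl
      have hlen : l.length = L := by simp [hl]
      have hget : ∀ (i : ℕ) (h : i < L), l[i]'(by omega) = w (a + i) := by
        intro i h; simp [hl]
      have hnodup : l.Nodup := by
        refine List.Nodup.map_on ?_ List.nodup_range
        intro i hi j hj hij
        rw [List.mem_range] at hi hj
        have := hinj (Set.mem_Ico.mpr ⟨by omega, by omega⟩)
          (Set.mem_Ico.mpr ⟨by omega, by omega⟩) hij
        omega
      set ρ := l.formPerm with hρ
      have hmem : ∀ i : Fin n, i ∈ l ↔ i ∈ (Finset.range L).image (fun u => w (a + u)) := by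
        intro i; simp [hl]
      have step1 : ∑ i, c i (ρ i) = ∑ i ∈ (Finset.range L).image (fun u => w (a + u)), c i (ρ i) := by
        refine (Finset.sum_subset (Finset.subset_univ _) ?_).symm
        intro i _ hi
        have : i ∉ l := fun h => hi ((hmem i).mp h)
        rw [hρ, List.formPerm_apply_of_notMem this, hdiag]
      have step2 : ∑ i ∈ (Finset.range L).image (fun u => w (a + u)), c i (ρ i)
          = ∑ u ∈ Finset.range L, c (w (a + u)) (ρ (w (a + u))) := by
        refine Finset.sum_image ?_
        intro i hi j hj hij
        rw [Finset.mem_coe, Finset.mem_range] at hi hj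
        have := hinj (Set.mem_Ico.mpr ⟨by omega, by omega⟩)
          (Set.mem_Ico.mpr ⟨by omega, by omega⟩) hij
        omega
      have step3 : ∑ u ∈ Finset.range L, c (w (a + u)) (ρ (w (a + u)))
          = ∑ u ∈ Finset.range L, c (w (a + u)) (w (a + u + 1)) := by
        refine Finset.sum_congr rfl fun i hi => ?_
        rw [Finset.mem_range] at hi
        have h1 : ρ (w (a + i)) = l[(i + 1) % l.length]'(by
          exact Nat.mod_lt _ (by omega)) := by
          rw [← hget i hi]
          exact List.formPerm_apply_getElem l hnodup i (by omega)
        rw [h1]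
        by_cases hi1 : i + 1 < L
        · have hm : (i + 1) % l.length = i + 1 := by rw [hlen]; exact Nat.mod_eq_of_lt hi1
          simp only [hm]
          rw [hget (i + 1) hi1, ← Nat.add_assoc]
        · have hieq : i + 1 = L := by omega
          have : (i + 1) % l.length = 0 := by rw [hlen, hieq, Nat.mod_self]
          simp only [this]
          have h0 : l[(0 : ℕ)]'(by omega) = w (a + 0) := hget 0 (by omega)
          rw [h0]
          congr 1
          have : a + i + 1 = b := by omega
          rw [this, Nat.add_zero, hw]
      have htarget : ∑ u ∈ Ico a b, c (w u) (w (u + 1))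
          = ∑ u ∈ Finset.range L, c (w (a + u)) (w (a + u + 1)) := by
        rw [Finset.sum_Ico_eq_sum_range]
      calc (0:ℝ) ≤ ∑ i, c i (ρ i) := hperm ρ
        _ = _ := by rw [step1, step2, step3, htarget]
    · rw [Set.InjOn] at hinj
      push_neg at hinj
      obtain ⟨x, hx, y, hy, hwxy, hne⟩ := hinj
      rw [Set.mem_Ico] at hx hy
      rcases Nat.lt_or_ge x y with hlt | hge
      · have hinner : 0 ≤ ∑ u ∈ Ico x y, c (w u) (w (u + 1)) :=
          IH w x y (by omega) hlt hwxy
        have houter : 0 ≤ ∑ u ∈ Ico a (b - (y - x)), c (splice w x y u) (splice w x y (u + 1)) := by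
          refine IH (splice w x y) a (b - (y - x)) (by omega) (by omega) ?_
          rw [splice_eq_left w (le_of_lt hlt) hwxy (by omega),
            splice_eq_right w (show x ≤ b - (y - x) by omega)]
          have : b - (y - x) + (y - x) = b := by omega
          rw [this, hw]
        rw [splice_sum c w (le_of_lt hlt) hwxy (by omega) (by omega)] at houter
        linarith
      · have hlt : y < x := by omega
        have hwxy' : w y = w x := hwxy.symm
        have hinner : 0 ≤ ∑ u ∈ Ico y x, c (w u) (w (u + 1)) :=
          IH w y x (by omega) hlt hwxy'
        have houter : 0 ≤ ∑ u ∈ Ico a (b - (x - y)), c (splice w y x u) (splice w y x (u + 1)) := by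
          refine IH (splice w y x) a (b - (x - y)) (by omega) (by omega) ?_
          rw [splice_eq_left w (le_of_lt hlt) hwxy' (by omega),
            splice_eq_right w (show y ≤ b - (x - y) by omega)]
          have : b - (x - y) + (x - y) = b := by omega
          rw [this, hw]
        rw [splice_sum c w (le_of_lt hlt) hwxy' (by omega) (by omega)] at houter
        linarith


variable [Nonempty (Fin n)]

def bell (c : Fin n → Fin n → ℝ) (z : Fin n) : ℕ → Fin n → ℝ
  | 0 => fun k => c z k
  | m + 1 => fun k => Finset.univ.inf' Finset.univ_nonempty (fun i => bell c z m i + c i k)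

lemma bell_succ_le (c : Fin n → Fin n → ℝ) (z : Fin n) (m : ℕ) (k i : Fin n) :
    bell c z (m + 1) k ≤ bell c z m i + c i k :=
  Finset.inf'_le _ (Finset.mem_univ i)

lemma bell_le_walk (c : Fin n → Fin n → ℝ) (z : Fin n) :
    ∀ (m : ℕ) (w : ℕ → Fin n), w 0 = z →
      bell c z m (w (m + 1)) ≤ ∑ u ∈ Finset.range (m + 1), c (w u) (w (u + 1)) := by
  intro m
  induction m with
  | zero =>
    intro w hw
    simp [bell, hw]
  | succ m IH =>
    intro w hw
    calc bell c z (m + 1) (w (m + 2)) ≤ bell c z m (w (m + 1)) + c (w (m + 1)) (w (m + 2)) :=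
          bell_succ_le c z m _ _
      _ ≤ (∑ u ∈ Finset.range (m + 1), c (w u) (w (u + 1))) + c (w (m + 1)) (w (m + 2)) := by
          linarith [IH w hw]
      _ = ∑ u ∈ Finset.range (m + 2), c (w u) (w (u + 1)) :=
          (Finset.sum_range_succ _ (m + 1)).symm

lemma bell_exists_walk (c : Fin n → Fin n → ℝ) (z : Fin n) :
    ∀ (m : ℕ) (k : Fin n), ∃ w : ℕ → Fin n, w 0 = z ∧ w (m + 1) = k ∧
      bell c z m k = ∑ u ∈ Finset.range (m + 1), c (w u) (w (u + 1)) := by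
  intro m
  induction m with
  | zero =>
    intro k
    refine ⟨fun u => if u = 0 then z else k, by simp, by simp, ?_⟩
    simp [bell]
  | succ m IH =>
    intro k
    obtain ⟨i, _, hi⟩ := Finset.exists_mem_eq_inf' (Finset.univ_nonempty)
      (fun i => bell c z m i + c i k)
    obtain ⟨w, hw0, hwm, hwsum⟩ := IH i
    refine ⟨fun u => if u ≤ m + 1 then w u else k, by simp [hw0], by simp, ?_⟩
    have hbell : bell c z (m + 1) k = bell c z m i + c i k := hi
    rw [hbell, Finset.sum_range_succ]
    have h1 : ∀ u ∈ Finset.range (m + 1),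
        c ((fun u => if u ≤ m + 1 then w u else k) u) ((fun u => if u ≤ m + 1 then w u else k) (u + 1))
          = c (w u) (w (u + 1)) := by
      intro u hu
      rw [Finset.mem_range] at hu
      simp only [if_pos (by omega : u ≤ m + 1), if_pos (by omega : u + 1 ≤ m + 1)]
    rw [Finset.sum_congr rfl h1, ← hwsum]
    simp only [if_pos (le_refl (m + 1)), if_neg (by omega : ¬ m + 1 + 1 ≤ m + 1), hwm]

lemma bell_anti (c : Fin n → Fin n → ℝ) (z : Fin n) (hdiag : ∀ i, c i i = 0) (k : Fin n) :
    ∀ {m1 m2 : ℕ}, m1 ≤ m2 → bell c z m2 k ≤ bell c z m1 k := by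
  intro m1 m2 h
  induction h with
  | refl => exact le_refl _
  | @step m h2 ih =>
    refine le_trans ?_ ih
    have := bell_succ_le c z m k k
    rw [hdiag, add_zero] at this
    exact this

lemma bell_stab (c : Fin n → Fin n → ℝ) (z : Fin n) (hdiag : ∀ i, c i i = 0)
    (hperm : ∀ ρ : Equiv.Perm (Fin n), 0 ≤ ∑ i, c i (ρ i)) (k : Fin n) :
    bell c z n k ≤ bell c z (n + 1) k := by
  obtain ⟨w, hw0, hwk, hwsum⟩ := bell_exists_walk c z (n + 1) k
  obtain ⟨a', b', hne, hab⟩ := Fintype.exists_ne_map_eq_of_card_lt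
    (fun u : Fin (n + 2) => w u) (by simp)
  obtain ⟨a, b, hab1, hle, hweq⟩ : ∃ a b : ℕ, a < b ∧ b ≤ n + 1 ∧ w a = w b := by
    rcases Nat.lt_or_ge (a' : ℕ) (b' : ℕ) with h | h
    · exact ⟨a', b', h, by omega, hab⟩
    · have hlt : (b' : ℕ) < (a' : ℕ) := by
        rcases Nat.lt_or_ge (b' : ℕ) (a' : ℕ) with h2 | h2
        · exact h2
        · exact absurd (Fin.ext (by omega)) hne
      exact ⟨b', a', hlt, by omega, hab.symm⟩
  set m' := n + 2 - (b - a) with hm'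
  have hm'1 : 1 ≤ m' := by omega
  have hm'n : m' ≤ n + 1 := by omega
  set w' := splice w a b with hw'
  have hw'0 : w' 0 = z := by
    rw [hw', splice_eq_left w (le_of_lt hab1) hweq (Nat.zero_le a), hw0]
  have hw'm : w' m' = k := by
    rw [hw', splice_eq_right w (show a ≤ m' by omega),
      show m' + (b - a) = n + 1 + 1 from by omega, hwk]
  have hsum : ∑ u ∈ Finset.range m', c (w' u) (w' (u + 1))
      = ∑ u ∈ Finset.range (n + 2), c (w u) (w (u + 1))
        - ∑ u ∈ Ico a b, c (w u) (w (u + 1)) := by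
    have h := splice_sum c w (le_of_lt hab1) hweq (Nat.zero_le a) (show b ≤ n + 2 by omega)
    rw [Finset.range_eq_Ico, Finset.range_eq_Ico, hm']
    exact h
  have hcyc : 0 ≤ ∑ u ∈ Ico a b, c (w u) (w (u + 1)) :=
    cycle_nonneg c hdiag hperm (b - a) w a b le_rfl hab1 hweq
  have hle2 : bell c z (m' - 1) k ≤ ∑ u ∈ Finset.range m', c (w' u) (w' (u + 1)) := by
    have h := bell_le_walk c z (m' - 1) w' hw'0
    rw [show m' - 1 + 1 = m' from by omega, hw'm] at h
    exact h
  have hmono : bell c z n k ≤ bell c z (m' - 1) k := bell_anti c z hdiag k (by omega)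
  have hrange : (∑ u ∈ Finset.range (n + 2), c (w u) (w (u + 1))) = bell c z (n + 1) k := by
    rw [hwsum]
  linarith


lemma real_dual (A : Matrix (Fin n) (Fin n) ℝ) (σ : Equiv.Perm (Fin n))
    (hσ : ∀ τ : Equiv.Perm (Fin n), ∑ i, A i (σ i) ≤ ∑ i, A i (τ i)) :
    ∃ U V : Fin n → ℝ, (∀ i j, U i + V j ≤ A i j) ∧
      (∑ i, U i) + (∑ j, V j) = ∑ i, A i (σ i) := by
  set c : Fin n → Fin n → ℝ := fun i k => A i (σ k) - A k (σ k) with hc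
  have hdiag : ∀ i, c i i = 0 := fun i => sub_self _
  have hperm : ∀ ρ : Equiv.Perm (Fin n), 0 ≤ ∑ i, c i (ρ i) := by
    intro ρ
    have h1 : ∑ i, c i (ρ i) = ∑ i, A i (σ (ρ i)) - ∑ i, A (ρ i) (σ (ρ i)) := by
      rw [← Finset.sum_sub_distrib]
    have h2 : ∑ i, A (ρ i) (σ (ρ i)) = ∑ i, A i (σ i) := Equiv.sum_comp ρ (fun i => A i (σ i))
    have h4 := hσ (ρ.trans σ)
    simp only [Equiv.trans_apply] at h4
    rw [h1, h2]
    linarith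
  set z : Fin n := Classical.arbitrary (Fin n) with hz
  set d : Fin n → ℝ := bell c z n with hd
  have htri : ∀ i k, d k ≤ d i + c i k := fun i k =>
    le_trans (bell_stab c z hdiag hperm k) (bell_succ_le c z n k i)
  refine ⟨fun i => -(d i), fun j => d (σ.symm j) + A (σ.symm j) j, ?_, ?_⟩
  · intro i j
    have h := htri i (σ.symm j)
    have hc2 : c i (σ.symm j) = A i j - A (σ.symm j) j := by
      rw [hc]; simp
    rw [hc2] at h
    simp only []
    linarith
  · have hV : ∑ j, (d (σ.symm j) + A (σ.symm j) j) = ∑ k, (d k + A k (σ k)) := by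
      rw [← Equiv.sum_comp σ.symm (fun k => d k + A k (σ k))]
      exact Finset.sum_congr rfl fun j _ => by rw [Equiv.apply_symm_apply]
    rw [hV]
    have hneg : ∑ i, -(d i) = -∑ i, d i := by
      rw [← Finset.sum_neg_distrib]
    rw [hneg, Finset.sum_add_distrib]
    ring

end HungarianAux

/-- **Existence of Hungarian pairs.**
Let `B ∈ (ℝ ∪ {+∞})^{n×n}` with `perm B ≠ +∞`, i.e. some permutation `σ` has finite
weight `Σ_i B_{iσ(i)}`.  Then there exists a Hungarian pair with respect to `B`:
vectors `U, V ∈ ℝ^n` with `B_{ij} ≥ U_i + V_j` for all `i, j`, and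
`U_1 + ⋯ + U_n + V_1 + ⋯ + V_n = perm B`. -/
theorem exists_hungarian_pair
    (n : ℕ) (hn : 1 ≤ n) (B : Matrix (Fin n) (Fin n) Rmin)
    (hB : ∃ σ : Equiv.Perm (Fin n), (∑ i, B i (σ i)) ≠ ⊤) :
    ∃ U V : Fin n → ℝ,
      (∀ i j, ((U i + V j : ℝ) : Rmin) ≤ B i j) ∧
      (((∑ i, U i) + ∑ j, V j : ℝ) : Rmin) = mpPerm B := by
  haveI : Nonempty (Fin n) := ⟨⟨0, hn⟩⟩
  obtain ⟨σ0, hσ0⟩ := hB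
  have hneP : (Finset.univ : Finset (Equiv.Perm (Fin n))).Nonempty := Finset.univ_nonempty
  obtain ⟨σ1, _, hσ1⟩ := Finset.exists_mem_eq_inf' hneP
    (fun σ : Equiv.Perm (Fin n) => ∑ i, B i (σ i))
  have hinf : mpPerm B = ∑ i, B i (σ1 i) := by
    rw [mpPerm, ← Finset.inf'_eq_inf hneP]; exact hσ1
  have hle0 : mpPerm B ≤ ∑ i, B i (σ0 i) := Finset.inf_le (Finset.mem_univ σ0)
  have htop : mpPerm B ≠ ⊤ := fun h => hσ0 (top_le_iff.mp (h ▸ hle0))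
  obtain ⟨p, hp⟩ := WithTop.ne_top_iff_exists.mp htop
  have hfin1 : ∀ i, B i (σ1 i) ≠ ⊤ := by
    intro i hi
    exact htop (by rw [hinf, WithTop.sum_eq_top]; exact ⟨i, Finset.mem_univ i, hi⟩)
  set C : Fin n → Fin n → ℝ := fun i j => (B i j).untopD 0 with hC
  have hCB : ∀ i j, B i j ≠ ⊤ → (C i j : Rmin) = B i j := by
    intro i j h
    obtain ⟨r, hr⟩ := WithTop.ne_top_iff_exists.mp h
    rw [hC]
    simp [← hr]
  set L : ℝ := (Finset.univ : Finset (Fin n × Fin n)).inf' Finset.univ_nonempty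
    (fun q => C q.1 q.2) with hL
  have hLC : ∀ i j, L ≤ C i j := fun i j => Finset.inf'_le _ (Finset.mem_univ (i, j))
  set M : ℝ := max (p - ((n - 1 : ℕ) : ℝ) * L + 1) L with hM
  have hLM : L ≤ M := le_max_right _ _
  have hM1 : p - ((n - 1 : ℕ) : ℝ) * L + 1 ≤ M := le_max_left _ _
  set A : Matrix (Fin n) (Fin n) ℝ := fun i j => if B i j = ⊤ then M else C i j with hA
  have hAB : ∀ i j, (A i j : Rmin) ≤ B i j := by
    intro i j
    by_cases h : B i j = ⊤
    · simp [h]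
    · rw [hA]; simp only [if_neg h]; rw [hCB i j h]
  have hLA : ∀ i j, L ≤ A i j := by
    intro i j
    rw [hA]
    by_cases h : B i j = ⊤ <;> simp [h, hLM, hLC]
  obtain ⟨σs, _, hσs⟩ := Finset.exists_min_image Finset.univ
    (fun σ : Equiv.Perm (Fin n) => ∑ i, A i (σ i)) hneP
  have hσs' : ∀ τ : Equiv.Perm (Fin n), ∑ i, A i (σs i) ≤ ∑ i, A i (τ i) := fun τ =>
    hσs τ (Finset.mem_univ τ)
  have hup : ∑ i, A i (σs i) ≤ p := by
    have h1 : ((∑ i, A i (σ1 i) : ℝ) : Rmin) = (p : Rmin) := by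
      rw [WithTop.coe_sum]
      rw [show (∑ i, ((A i (σ1 i) : ℝ) : Rmin)) = ∑ i, B i (σ1 i) from
        Finset.sum_congr rfl fun i _ => by
          rw [hA]; simp only [if_neg (hfin1 i)]; exact hCB _ _ (hfin1 i)]
      rw [← hinf, ← hp]
    have h1' : ∑ i, A i (σ1 i) = p := by exact_mod_cast h1
    calc ∑ i, A i (σs i) ≤ ∑ i, A i (σ1 i) := hσs' σ1
      _ = p := h1'
  have hdown : p ≤ ∑ i, A i (σs i) := by
    by_cases hall : ∀ i, B i (σs i) ≠ ⊤
    · have hcoe : ((∑ i, A i (σs i) : ℝ) : Rmin) = ∑ i, B i (σs i) := by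
        rw [WithTop.coe_sum]
        exact Finset.sum_congr rfl fun i _ => by
          rw [hA]; simp only [if_neg (hall i)]; exact hCB _ _ (hall i)
      have h2 : (p : Rmin) ≤ ((∑ i, A i (σs i) : ℝ) : Rmin) := by
        rw [hcoe, hp]
        exact Finset.inf_le (Finset.mem_univ σs)
      exact_mod_cast h2
    · push_neg at hall
      obtain ⟨i0, hi0⟩ := hall
      have hsplit : A i0 (σs i0) + ∑ i ∈ Finset.univ.erase i0, A i (σs i) = ∑ i, A i (σs i) :=
        Finset.add_sum_erase _ (fun i => A i (σs i)) (Finset.mem_univ i0)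
      have hM0 : A i0 (σs i0) = M := by rw [hA]; simp [hi0]
      have hrest : ((n - 1 : ℕ) : ℝ) * L ≤ ∑ i ∈ Finset.univ.erase i0, A i (σs i) := by
        have hcard : (Finset.univ.erase i0).card = n - 1 := by
          rw [Finset.card_erase_of_mem (Finset.mem_univ i0), Finset.card_univ, Fintype.card_fin]
        have h3 := Finset.card_nsmul_le_sum (Finset.univ.erase i0) (fun i => A i (σs i)) L
          (fun i _ => hLA i (σs i))
        rw [hcard] at h3
        simpa [nsmul_eq_mul] using h3
      rw [← hsplit, hM0]
      linarith
  have hval : ∑ i, A i (σs i) = p := le_antisymm hup hdown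
  obtain ⟨U, V, hUV, hsum⟩ := HungarianAux.real_dual A σs hσs'
  refine ⟨U, V, ?_, ?_⟩
  · intro i j
    exact le_trans (WithTop.coe_le_coe.mpr (hUV i j)) (hAB i j)
  · rw [show ((∑ i, U i) + ∑ j, V j : ℝ) = p from by rw [hsum, hval], hp]
end
end

section
/- (Cuninghame-Green–Meijer factorization) Let P = ⊕_{k=0}^n P_k X^k be a formal polynomial over the min-plus semiring ℝ_min of degree n, i.e., with P_n ≠ +∞, and let P̂ : ℝ ∪ {+∞} → ℝ ∪ {+∞} be its associated polynomial function, P̂(x) = min_{0 ≤ k ≤ n} (P_k + k x). Then there exist a ∈ ℝ and c_1, …, c_n ∈ ℝ ∪ {+∞} with c_1 ≤ c_2 ≤ ⋯ ≤ c_n such that P̂(x) = a + min(x, c_1) + min(x, c_2) + ⋯ + min(x, c_n) for all x ∈ ℝ ∪ {+∞}; moreover a = P_n, and the sorted tuple (c_1, …, c_n) is uniquely determined by the function P̂. The numbers c_1, …, c_n are called the corners (roots) of P. -/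
open Finset

noncomputable section

/-- The min-plus polynomial function associated with the formal min-plus polynomial
`P = ⊕_{k=0}^n P_k X^k`, evaluated at `x ∈ ℝ ∪ {+∞}`:
`P̂ x = min_{0 ≤ k ≤ n} (P_k + k·x)` (where `k • x = x + ⋯ + x` `k` times, so that
`0 • (+∞) = 0`). -/
def mpPolyFun {n : ℕ} (P : Fin (n + 1) → Rmin) (x : Rmin) : Rmin :=
  Finset.univ.inf fun k : Fin (n + 1) => P k + (k : ℕ) • x

lemma nsmul_coe (k : ℕ) (x : ℝ) : (k • (x : Rmin)) = ((k * x : ℝ) : Rmin) := by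
  induction k with
  | zero => simp
  | succ k ih => rw [succ_nsmul, ih, ← WithTop.coe_add]; congr 1; push_cast; ring

lemma eq_of_forall_real_le (a b : Rmin) (h : ∀ x : ℝ, (x:Rmin) ≤ a ↔ (x:Rmin) ≤ b) : a = b := by
  induction a using WithTop.recTopCoe with
  | top =>
    induction b using WithTop.recTopCoe with
    | top => rfl
    | coe y => exact absurd ((h (y+1)).mp le_top) (by exact_mod_cast not_le.mpr (lt_add_one y))
  | coe z =>
    induction b using WithTop.recTopCoe with
    | top => exact absurd ((h (z+1)).mpr le_top) (by exact_mod_cast not_le.mpr (lt_add_one z))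
    | coe y =>
      have h1 := (h z).mp le_rfl
      have h2 := (h y).mpr le_rfl
      exact le_antisymm (by exact_mod_cast h1) (by exact_mod_cast h2)

lemma aux_sum (m : ℕ) (f : Fin m → Rmin) (x : ℝ) (hle : ∀ i, f i ≤ (x:Rmin))
    (hsum : ∑ i, f i = ((m * x : ℝ) : Rmin)) : ∀ i, f i = (x:Rmin) := by
  have hne : ∀ i, f i ≠ ⊤ := fun i => ne_top_of_le_ne_top (WithTop.coe_ne_top) (hle i)
  choose g hg using fun i => WithTop.ne_top_iff_exists.mp (hne i)
  have hsum' : ∑ i, g i = m * x := by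
    have : ((∑ i, g i : ℝ) : Rmin) = ((m * x : ℝ) : Rmin) := by
      rw [WithTop.coe_sum]; rw [← hsum]; congr 1; ext i; exact hg i
    exact_mod_cast this
  have hle' : ∀ i ∈ Finset.univ, g i ≤ x := fun i _ => by
    have := hle i; rw [← hg i] at this; exact_mod_cast this
  have := (Finset.sum_eq_sum_iff_of_le hle').mp (by rw [hsum']; simp [mul_comm])
  intro i
  rw [← hg i, this i (Finset.mem_univ i)]

lemma monotone_cons (n : ℕ) (b : Rmin) (f : Fin n → Rmin) (hf : Monotone f)
    (hb : ∀ i, b ≤ f i) : Monotone (Fin.cons b f : Fin (n+1) → Rmin) := by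
  intro i j hij
  induction i using Fin.cases with
  | zero =>
    induction j using Fin.cases with
    | zero => exact le_rfl
    | succ j => simpa using hb j
  | succ i =>
    induction j using Fin.cases with
    | zero => exact absurd (Fin.le_zero_iff.mp hij) (Fin.succ_ne_zero i)
    | succ j => simpa using hf (Fin.succ_le_succ_iff.mp hij)

/-- **Cuninghame-Green–Meijer factorization.**
Let `P = ⊕_{k=0}^n P_k X^k` be a formal min-plus polynomial of degree `n`, i.e. with
`P_n ≠ +∞`.  Then there exist `a ∈ ℝ` and `c_1 ≤ c_2 ≤ ⋯ ≤ c_n` in `ℝ ∪ {+∞}` such that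
`P̂(x) = a + min(x, c_1) + ⋯ + min(x, c_n)` for all `x ∈ ℝ ∪ {+∞}` (that is,
`P̂ = a ⊗ (x ⊕ c_1) ⊗ ⋯ ⊗ (x ⊕ c_n)` in the min-plus sense); moreover `a = P_n` and the
sorted tuple `(c_1, …, c_n)` is uniquely determined by the function `P̂`.  The
`c_1, …, c_n` are the corners (roots) of `P`. -/
theorem cuninghameGreen_meijer_factorization
    (n : ℕ) (P : Fin (n + 1) → Rmin) (hP : P (Fin.last n) ≠ ⊤) :
    ∃ (a : ℝ) (c : Fin n → Rmin), Monotone c ∧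
      (∀ x : Rmin, mpPolyFun P x = (a : Rmin) + ∑ i, min x (c i)) ∧
      (a : Rmin) = P (Fin.last n) ∧
      (∀ (a' : ℝ) (c' : Fin n → Rmin), Monotone c' →
        (∀ x : Rmin, mpPolyFun P x = (a' : Rmin) + ∑ i, min x (c' i)) →
        a' = a ∧ c' = c) := by
  induction n with
  | zero =>
    obtain ⟨p, hp⟩ := WithTop.ne_top_iff_exists.mp hP
    have hval : ∀ x : Rmin, mpPolyFun P x = P 0 := by
      intro x
      have : (fun k : Fin 1 => P k + (k : ℕ) • x) = fun _ => P 0 := by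
        funext k
        have : k = 0 := Subsingleton.elim k 0
        subst this
        simp
      simp [mpPolyFun, this]
    have h00 : Fin.last 0 = (0 : Fin 1) := rfl
    rw [h00] at hp
    refine ⟨p, fun i => i.elim0, fun i => i.elim0, ?_, ?_, ?_⟩
    · intro x; rw [hval]; simp [← hp]
    · rw [h00]; exact hp
    · intro a' c' _ heq
      constructor
      · have := heq 0
        rw [hval] at this
        simp at this
        rw [← hp] at this
        exact_mod_cast this.symm
      · funext i; exact i.elim0
  | succ n ih =>
    obtain ⟨p, hp⟩ := WithTop.ne_top_iff_exists.mp hP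
    -- the smallest corner
    set cT : Fin (n+1) → Rmin :=
      fun k => (P k.castSucc).map (fun y => (y - p) / ((n:ℝ) + 1 - (k:ℕ))) with hcT_def
    set cmin : Rmin := Finset.univ.inf cT with hcmin_def
    have hd : ∀ k : Fin (n+1), (0:ℝ) < (n:ℝ) + 1 - (k:ℕ) := by
      intro k
      have : ((k:ℕ):ℝ) ≤ n := by exact_mod_cast k.is_le
      linarith
    have hcT : ∀ (k : Fin (n+1)) (y : ℝ),
        ((y:Rmin) ≤ cT k ↔ ((p + ((n:ℝ)+1-(k:ℕ))*y : ℝ) : Rmin) ≤ P k.castSucc) := by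
      intro k y
      rcases eq_or_ne (P k.castSucc) ⊤ with hPk | hPk
      · simp [hcT_def, hPk]
      · obtain ⟨z, hz⟩ := WithTop.ne_top_iff_exists.mp hPk
        rw [hcT_def]
        simp only [← hz, WithTop.map_coe, WithTop.coe_le_coe]
        rw [le_div_iff₀ (hd k)]
        constructor <;> intro h <;> nlinarith [hd k]
    -- the characterization of being below the smallest corner
    have hPle : ∀ (x : Rmin) (k : Fin (n+2)), mpPolyFun P x ≤ P k + (k:ℕ) • x :=
      fun x k => Finset.inf_le (Finset.mem_univ k)
    have hlow : ∀ x : ℝ, (x:Rmin) ≤ cmin → mpPolyFun P x = ((p + ((n:ℝ)+1)*x : ℝ) : Rmin) := by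
      intro x hx
      have hxk : ∀ k : Fin (n+1), ((p + ((n:ℝ)+1-(k:ℕ))*x : ℝ) : Rmin) ≤ P k.castSucc :=
        fun k => (hcT k x).mp (le_trans hx (Finset.inf_le (Finset.mem_univ k)))
      apply le_antisymm
      · have := hPle x (Fin.last (n+1))
        rw [← hp] at this
        rw [Fin.val_last, nsmul_coe, ← WithTop.coe_add] at this
        exact le_trans this (le_of_eq (by congr 1; push_cast; ring))
      · apply Finset.le_inf
        intro k _
        induction k using Fin.lastCases with
        | last =>
          rw [← hp, Fin.val_last, nsmul_coe, ← WithTop.coe_add, WithTop.coe_le_coe]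
          exact le_of_eq (by push_cast; ring)
        | cast j =>
          refine le_trans ?_ (add_le_add_left (hxk j) _)
          rw [Fin.coe_castSucc, nsmul_coe, ← WithTop.coe_add, WithTop.coe_le_coe]
          have hj : ((j:ℕ):ℝ) ≤ n := by exact_mod_cast j.is_le
          nlinarith [(hcT j x).mpr (hxk j)]
    have hhigh : ∀ x : ℝ, mpPolyFun P x = ((p + ((n:ℝ)+1)*x : ℝ) : Rmin) → (x:Rmin) ≤ cmin := by
      intro x hx
      rw [hcmin_def]
      apply Finset.le_inf
      intro k _
      rw [hcT k x]
      have := hPle (x:Rmin) k.castSucc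
      rw [hx, Fin.coe_castSucc, nsmul_coe] at this
      rcases eq_or_ne (P k.castSucc) ⊤ with hPk | hPk
      · rw [hPk]; exact le_top
      · obtain ⟨z, hz⟩ := WithTop.ne_top_iff_exists.mp hPk
        rw [← hz] at this ⊢
        rw [← WithTop.coe_add, WithTop.coe_le_coe] at this
        rw [WithTop.coe_le_coe]
        have hj : ((k:ℕ):ℝ) ≤ n := by exact_mod_cast k.is_le
        nlinarith
    rcases eq_or_ne cmin ⊤ with hctop | hcne
    -- Case A : all lower coefficients are +∞
    · have hAtop : ∀ k : Fin (n+1), P k.castSucc = ⊤ := by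
        intro k
        have : cT k = ⊤ := by
          have := (Finset.inf_eq_top_iff _ _).mp (hcmin_def ▸ hctop) k (Finset.mem_univ k)
          exact this
        rcases eq_or_ne (P k.castSucc) ⊤ with h | h
        · exact h
        · obtain ⟨z, hz⟩ := WithTop.ne_top_iff_exists.mp h
          rw [hcT_def] at this
          simp only [← hz, WithTop.map_coe] at this
          exact absurd this WithTop.coe_ne_top
      have hPA : ∀ x : Rmin, mpPolyFun P x = (p : Rmin) + (n+1) • x := by
        intro x
        apply le_antisymm
        · have := hPle x (Fin.last (n+1))
          rw [← hp, Fin.val_last] at this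
          exact this
        · apply Finset.le_inf
          intro k _
          induction k using Fin.lastCases with
          | last => rw [← hp, Fin.val_last]
          | cast j => rw [hAtop j]; simp
      refine ⟨p, fun _ => ⊤, monotone_const, ?_, hp, ?_⟩
      · intro x
        rw [hPA x]
        congr 1
        simp [Finset.card_univ]
      · intro a' c'' hm he
        have hctop' : ∀ i, c'' i = ⊤ := by
          intro i
          rcases eq_or_ne (c'' i) ⊤ with h | h
          · exact h
          obtain ⟨y, hy⟩ := WithTop.ne_top_iff_exists.mp h
          exfalso
          have key : ∀ x : ℝ, p + ((n:ℝ)+1) * x ≤ a' + y + n * x := by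
            intro x
            have h1 := he (x : Rmin)
            rw [hPA] at h1
            have h2 : ∑ j : Fin (n+1), min (x:Rmin) (c'' j) ≤ (y:Rmin) + ((n * x : ℝ) : Rmin) := by
              rw [← Finset.add_sum_erase _ _ (Finset.mem_univ i)]
              apply add_le_add
              · rw [← hy]; exact min_le_right _ _
              · calc ∑ j ∈ Finset.univ.erase i, min (x:Rmin) (c'' j)
                    ≤ ∑ _j ∈ Finset.univ.erase i, (x:Rmin) :=
                      Finset.sum_le_sum (fun j _ => min_le_left _ _)
                  _ = ((n * x : ℝ) : Rmin) := by
                      rw [Finset.sum_const, Finset.card_erase_of_mem (Finset.mem_univ i)]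
                      rw [Finset.card_univ]
                      simp [nsmul_coe]
            have h3 : ((p + ((n:ℝ)+1)*x : ℝ) : Rmin) ≤ ((a' + (y + n*x) : ℝ) : Rmin) := by
              rw [nsmul_coe, ← WithTop.coe_add] at h1
              rw [WithTop.coe_add, WithTop.coe_add]
              calc ((p + ((n:ℝ)+1)*x : ℝ) : Rmin) = (p : Rmin) + (((n:ℝ)+1)*x : ℝ) := by
                    rw [← WithTop.coe_add]
                  _ = (a':Rmin) + ∑ j : Fin (n+1), min (x:Rmin) (c'' j) := by
                    rw [← h1]; norm_cast
                  _ ≤ (a':Rmin) + ((y:Rmin) + ((n * x : ℝ) : Rmin)) := add_le_add_right h2 _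
            have := WithTop.coe_le_coe.mp h3
            linarith
          have := key (a' + y - p + 1)
          linarith
        constructor
        · have h1 := he (0 : Rmin)
          rw [hPA] at h1
          simp only [hctop'] at h1
          have : ((0:ℝ):Rmin) = (0 : Rmin) := rfl
          rw [show ((0:Rmin)) = ((0:ℝ):Rmin) from rfl] at h1
          rw [nsmul_coe] at h1
          simp at h1
          exact_mod_cast h1.symm
        · funext i; rw [hctop' i]
    -- Case B : the smallest corner is finite
    · obtain ⟨c, hc⟩ := WithTop.ne_top_iff_exists.mp hcne
      have hB1 : ∀ k : Fin (n+1), ((p + ((n:ℝ)+1-(k:ℕ))*c : ℝ) : Rmin) ≤ P k.castSucc :=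
        fun k => (hcT k c).mp (hc ▸ Finset.inf_le (Finset.mem_univ k))
      have hB2 : ∃ k₀ : Fin (n+1), P k₀.castSucc = ((p + ((n:ℝ)+1-(k₀:ℕ))*c : ℝ) : Rmin) := by
        obtain ⟨k₀, -, hk₀⟩ := Finset.exists_mem_eq_inf Finset.univ Finset.univ_nonempty cT
        refine ⟨k₀, ?_⟩
        rw [← hcmin_def, ← hc] at hk₀
        rcases eq_or_ne (P k₀.castSucc) ⊤ with h | h
        · rw [hcT_def] at hk₀; simp [h] at hk₀
        · obtain ⟨z, hz⟩ := WithTop.ne_top_iff_exists.mp h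
          rw [hcT_def] at hk₀
          simp only [← hz, WithTop.map_coe, WithTop.coe_inj] at hk₀
          rw [← hz, WithTop.coe_inj]
          have hd0 : ((n:ℝ)+1-((k₀:Fin (n+1)):ℕ)) ≠ 0 := ne_of_gt (hd k₀)
          field_simp at hk₀
          linarith [hk₀]
      set Q : Fin (n+1) → Rmin :=
        fun j => if j = Fin.last n then (p : Rmin) else P j.castSucc + ((-c : ℝ) : Rmin)
        with hQ_def
      have hQlast : Q (Fin.last n) = (p : Rmin) := if_pos rfl
      have hQne : ∀ j : Fin (n+1), j ≠ Fin.last n →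
          Q j = P j.castSucc + ((-c : ℝ) : Rmin) := fun j hj => if_neg hj
      have hQle : ∀ (x : Rmin) (j : Fin (n+1)), mpPolyFun Q x ≤ Q j + (j:ℕ) • x :=
        fun x j => Finset.inf_le (Finset.mem_univ j)
      have hcancel : ∀ (y A : Rmin), (c:Rmin) + (y + ((-c:ℝ):Rmin) + A) = y + A := by
        intro y A
        rcases eq_or_ne y ⊤ with h | h
        · rw [h]; simp
        · obtain ⟨z, hz⟩ := WithTop.ne_top_iff_exists.mp h
          rw [← hz, ← add_assoc, ← WithTop.coe_add, ← WithTop.coe_add]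
          congr 2
          ring
      have hlowc : ∀ x : ℝ, x ≤ c → mpPolyFun P x = ((p + ((n:ℝ)+1)*x : ℝ) : Rmin) := by
        intro x hxc
        exact hlow x (by rw [← hc]; exact_mod_cast hxc)
      have hQlow : ∀ x : ℝ, x ≤ c → mpPolyFun Q x = ((p + (n:ℝ)*x : ℝ) : Rmin) := by
        intro x hxc
        apply le_antisymm
        · have := hQle (x:Rmin) (Fin.last n)
          rw [hQlast, Fin.val_last, nsmul_coe, ← WithTop.coe_add] at this
          exact this
        · apply Finset.le_inf
          intro j _
          induction j using Fin.lastCases with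
          | last =>
            rw [hQlast, Fin.val_last, nsmul_coe, ← WithTop.coe_add]
          | cast j =>
            rw [hQne j.castSucc (Fin.castSucc_lt_last j).ne, Fin.coe_castSucc, nsmul_coe]
            have h1 := hB1 j.castSucc
            rw [Fin.coe_castSucc] at h1
            refine le_trans ?_ (add_le_add_left (add_le_add_left h1 _) _)
            rw [← WithTop.coe_add, ← WithTop.coe_add, WithTop.coe_le_coe]
            have hj : ((j:ℕ):ℝ) < n := by exact_mod_cast j.isLt
            nlinarith
      have hB3 : ∀ x : Rmin, mpPolyFun P x = min x (c:Rmin) + mpPolyFun Q x := by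
        intro x
        rcases le_total x (c:Rmin) with hx | hx
        · have hxt : x ≠ ⊤ := ne_top_of_le_ne_top WithTop.coe_ne_top hx
          obtain ⟨r, hr⟩ := WithTop.ne_top_iff_exists.mp hxt
          rw [← hr] at hx ⊢
          have hrc : r ≤ c := WithTop.coe_le_coe.mp hx
          rw [min_eq_left hx, hQlow r hrc, hlowc r hrc, ← WithTop.coe_add, WithTop.coe_inj]
          ring
        · rw [min_eq_right hx]
          apply le_antisymm
          · obtain ⟨j, -, hj⟩ := Finset.exists_mem_eq_inf Finset.univ Finset.univ_nonempty
              (fun j : Fin (n+1) => Q j + (j:ℕ) • x)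
            rw [show mpPolyFun Q x = _ from hj]
            induction j using Fin.lastCases with
            | last =>
              rw [hQlast, Fin.val_last]
              obtain ⟨k₀, hk₀⟩ := hB2
              have h1 := hPle x k₀.castSucc
              rw [hk₀, Fin.coe_castSucc] at h1
              refine le_trans h1 ?_
              have hsplit : (n:ℕ) = (n - (k₀:ℕ)) + (k₀:ℕ) := (Nat.sub_add_cancel k₀.is_le).symm
              have hcoef : ((p + ((n:ℝ)+1-(k₀:ℕ))*c : ℝ) : Rmin)
                  = (c:Rmin) + (p:Rmin) + ((n - (k₀:ℕ) : ℕ)) • (c:Rmin) := by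
                rw [nsmul_coe, ← WithTop.coe_add, ← WithTop.coe_add, WithTop.coe_inj]
                have hnc : (((n - (k₀:ℕ) : ℕ)):ℝ) = (n:ℝ) - ((k₀:ℕ):ℝ) := by
                  exact_mod_cast Nat.cast_sub k₀.is_le
                rw [hnc]; ring
              rw [hcoef]
              calc (c:Rmin) + (p:Rmin) + ((n - (k₀:ℕ) : ℕ)) • (c:Rmin) + (k₀:ℕ) • x
                  ≤ (c:Rmin) + (p:Rmin) + ((n - (k₀:ℕ) : ℕ)) • x + (k₀:ℕ) • x := by
                    refine add_le_add_left (add_le_add_right ?_ _) _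
                    exact nsmul_le_nsmul_right hx _
                _ = (c:Rmin) + ((p:Rmin) + (n:ℕ) • x) := by
                    rw [add_assoc ((c:Rmin) + (p:Rmin)), ← add_nsmul, ← hsplit, add_assoc]
            | cast j =>
              rw [hQne j.castSucc (Fin.castSucc_lt_last j).ne, Fin.coe_castSucc,
                hcancel (P j.castSucc.castSucc) ((j:ℕ) • x)]
              have h1 := hPle x j.castSucc.castSucc
              rw [Fin.coe_castSucc, Fin.coe_castSucc] at h1
              exact h1
          · apply Finset.le_inf
            intro k _
            induction k using Fin.lastCases with
            | last =>
              have h1 := hQle x (Fin.last n)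
              rw [hQlast, Fin.val_last] at h1
              refine le_trans (add_le_add_right h1 _) ?_
              rw [← hp, Fin.val_last, succ_nsmul]
              calc (c:Rmin) + ((p:Rmin) + (n:ℕ) • x)
                  = (p:Rmin) + ((n:ℕ) • x + (c:Rmin)) := by
                    rw [← add_assoc, ← add_assoc, add_comm (c:Rmin) (p:Rmin), add_assoc,
                      add_comm (c:Rmin) ((n:ℕ) • x), ← add_assoc, add_assoc]
                _ ≤ (p:Rmin) + ((n:ℕ) • x + x) := add_le_add_right (add_le_add_right hx _) _
            | cast j =>
              rcases eq_or_ne j (Fin.last n) with hj | hj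
              · subst hj
                have h1 := hQle x (Fin.last n)
                rw [hQlast, Fin.val_last] at h1
                refine le_trans (add_le_add_right h1 _) ?_
                rw [Fin.coe_castSucc, Fin.val_last]
                have h2 := hB1 (Fin.last n)
                rw [Fin.val_last] at h2
                refine le_trans ?_ (add_le_add_left h2 _)
                rw [← add_assoc, ← WithTop.coe_add]
                refine add_le_add_left ?_ _
                rw [WithTop.coe_le_coe]
                have : ((n:ℕ):ℝ) = (n:ℝ) := rfl
                nlinarith [le_refl (0:ℝ)]
              · have h1 := hQle x j
                rw [hQne j hj] at h1
                refine le_trans (add_le_add_right h1 _) ?_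
                rw [hcancel (P j.castSucc) ((j:ℕ) • x), Fin.coe_castSucc]
      -- apply the induction hypothesis to Q
      have hQtop : Q (Fin.last n) ≠ ⊤ := by rw [hQlast]; exact WithTop.coe_ne_top
      obtain ⟨a, c', hc'mono, hc'eq, hc'a, hc'uniq⟩ := ih Q hQtop
      have ha : a = p := by
        rw [hQlast] at hc'a
        exact_mod_cast hc'a
      rw [ha] at hc'eq hc'uniq
      have hB5 : ∀ i, (c:Rmin) ≤ c' i := by
        intro i
        have h1 := hc'eq (c:Rmin)
        rw [hQlow c le_rfl] at h1
        have h2 : ∑ i, min (c:Rmin) (c' i) = (((n:ℕ) * c : ℝ) : Rmin) := by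
          apply WithTop.add_left_cancel ((WithTop.coe_ne_top : (p:Rmin) ≠ ⊤))
          rw [← h1, ← WithTop.coe_add]
        have := aux_sum n (fun i => min (c:Rmin) (c' i)) c (fun i => min_le_left _ _) h2 i
        exact min_eq_left_iff.mp this
      refine ⟨p, Fin.cons (c:Rmin) c', monotone_cons n _ c' hc'mono hB5, ?_, hp, ?_⟩
      · intro x
        rw [Fin.sum_univ_succ]
        simp only [Fin.cons_zero, Fin.cons_succ]
        rw [hB3 x, hc'eq x, ← add_assoc, ← add_assoc, add_comm (min x (c:Rmin)) ((p:Rmin))]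
      · intro a' c'' hm'' he''
        have ha' : a' = p := by
          have hex : ∃ r : ℝ, r ≤ c ∧ (r:Rmin) ≤ c'' 0 := by
            rcases eq_or_ne (c'' 0) ⊤ with h | h
            · exact ⟨c, le_rfl, h ▸ le_top⟩
            · obtain ⟨y, hy⟩ := WithTop.ne_top_iff_exists.mp h
              exact ⟨min c y, min_le_left _ _, by rw [← hy]; exact_mod_cast min_le_right c y⟩
          obtain ⟨r, hr1, hr2⟩ := hex
          have h1 := he'' (r:Rmin)
          rw [hlowc r hr1] at h1
          have hall : ∀ i : Fin (n+1), min (r:Rmin) (c'' i) = (r:Rmin) := fun i =>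
            min_eq_left (le_trans hr2 (hm'' (Fin.zero_le i)))
          simp only [hall] at h1
          rw [Finset.sum_const, Finset.card_univ, Fintype.card_fin, nsmul_coe,
            ← WithTop.coe_add] at h1
          have := WithTop.coe_inj.mp h1
          push_cast at this
          linarith
        rw [ha'] at he''
        have hc0 : c'' 0 = (c:Rmin) := by
          apply eq_of_forall_real_le
          intro x
          constructor
          · intro hx0
            have hall : ∀ i : Fin (n+1), min (x:Rmin) (c'' i) = (x:Rmin) := fun i =>
              min_eq_left (le_trans hx0 (hm'' (Fin.zero_le i)))
            have h1 := he'' (x:Rmin)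
            simp only [hall] at h1
            rw [Finset.sum_const, Finset.card_univ, Fintype.card_fin, nsmul_coe,
              ← WithTop.coe_add] at h1
            have h2 : mpPolyFun P (x:Rmin) = ((p + ((n:ℝ)+1)*x : ℝ) : Rmin) := by
              rw [h1, WithTop.coe_inj]; push_cast; ring
            rw [hc]
            exact hhigh x h2
          · intro hxc
            have hxc' : x ≤ c := WithTop.coe_le_coe.mp hxc
            have h1 := he'' (x:Rmin)
            rw [hlowc x hxc'] at h1
            have h2 : ∑ i, min (x:Rmin) (c'' i) = ((((n:ℕ)+1) * x : ℝ) : Rmin) := by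
              apply WithTop.add_left_cancel ((WithTop.coe_ne_top : (p:Rmin) ≠ ⊤))
              rw [← h1, ← WithTop.coe_add]
            have := aux_sum (n+1) (fun i => min (x:Rmin) (c'' i)) x
              (fun i => min_le_left _ _) (by exact_mod_cast h2) 0
            exact min_eq_left_iff.mp this
        have hdeq : ∀ x : Rmin, mpPolyFun Q x = (p:Rmin) + ∑ i : Fin n, min x (c'' i.succ) := by
          intro x
          have h1 := he'' x
          rw [Fin.sum_univ_succ, hc0, hB3 x] at h1
          have hminne : min x (c:Rmin) ≠ ⊤ :=
            ne_top_of_le_ne_top WithTop.coe_ne_top (min_le_right _ _)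
          apply WithTop.add_left_cancel hminne
          rw [h1, ← add_assoc, ← add_assoc, add_comm ((p:Rmin)) (min x (c:Rmin))]
        obtain ⟨-, hd⟩ := hc'uniq p (fun i => c'' i.succ)
          (fun i j hij => hm'' (Fin.succ_le_succ_iff.mpr hij)) hdeq
        refine ⟨ha', ?_⟩
        · rw [← Fin.cons_self_tail c'', hc0]
          have htail : Fin.tail c'' = c' := hd
          rw [htail]
end
end
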